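/- The indicator vector of D := {1,2,3,4,6,8,9,12,13,16,18,23} belongs to 𝒞₂₄ (D is a dodecad). Let ρ : D → {1,…,12} be the bijection 12↦1, 8↦2, 18↦3, 13↦4, 2↦5, 16↦6, 3↦7, 23↦8, 1↦9, 6↦10, 4↦11, 9↦12. Then the map sending each σ in the setwise stabilizer {σ ∈ M₂₄ : σ(D) = D} to the permutation ρ∘(σ restricted to D)∘ρ⁻¹ of {1,…,12} is an injective group homomorphism whose image is exactly the Mathieu group M₁₂ (the subgroup of S₁₂ generated by A = (1,6,5,4,10,9,12,7,11,3,2), B = (1,4,6,12,2)(3,11,9,7,5), C = (1,7)(2,5)(3,12)(4,9)(6,11)(8,10), D = (1,2)(3,5)(4,12)(7,11)). -/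

import Mathlib

/-- Coordinates are labelled `1,…,24`, realized inside `Fin 25` (the coordinate `0` is unused:
all codewords vanish there and every code automorphism fixes it). -/
abbrev X24 : Type := Fin 25

/-- The indicator vector of a set of coordinates. -/
def indvec (S : Finset X24) : X24 → ZMod 2 := fun i => if i ∈ S then 1 else 0

/-- Supports of the twelve generators of the extended binary Golay code. -/
def golayGen : Fin 12 → Finset X24 :=
  ![{1, 2, 3, 5, 12, 16, 18, 22},
    {3, 4, 6, 9, 15, 17, 21, 22},
    {4, 7, 8, 10, 12, 15, 16, 19},
    {7, 8, 11, 15, 16, 17, 18, 23},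
    {1, 2, 4, 7, 8, 16, 18, 21},
    {1, 5, 8, 13, 14, 16, 18, 23},
    {10, 11, 12, 13, 14, 17, 20, 22},
    {3, 8, 9, 11, 13, 18, 19, 23},
    {2, 5, 9, 10, 14, 19, 21, 24},
    {1, 4, 7, 8, 9, 13, 15, 16, 18, 19, 22, 23},
    {1, 2, 3, 7, 8, 10, 11, 13, 16, 18, 22, 23},
    {1, 2, 5, 7, 8, 9, 10, 12, 15, 16, 18, 23}]

/-- The extended binary Golay code `𝒞₂₄`. -/
def Golay : Submodule (ZMod 2) (X24 → ZMod 2) :=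
  Submodule.span (ZMod 2) (Set.range fun i => indvec (golayGen i))

/-- The Mathieu group `M₂₄`: the group of coordinate permutations mapping `𝒞₂₄` onto itself. -/
def M24 : Subgroup (Equiv.Perm X24) where
  carrier := {σ | ∀ c : X24 → ZMod 2, c ∈ Golay ↔ c ∘ σ ∈ Golay}
  one_mem' := fun c => Iff.rfl
  mul_mem' := fun {a b} ha hb c => (ha c).trans (hb (c ∘ a))
  inv_mem' := by
    intro a ha c
    have h2 := ha (c ∘ ⇑a⁻¹)
    rw [show (c ∘ ⇑a⁻¹) ∘ ⇑a = c from by funext x; simp] at h2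
    exact h2.symm

/-- The dodecad `D = {1,2,3,4,6,8,9,12,13,16,18,23}`. -/
def Dset : Finset X24 := {1, 2, 3, 4, 6, 8, 9, 12, 13, 16, 18, 23}

open Pointwise in
/-- The setwise stabilizer of `D` in `M₂₄`. -/
def StabD : Subgroup (Equiv.Perm X24) :=
  M24 ⊓ MulAction.stabilizer (Equiv.Perm X24) (↑Dset : Set X24)

/-- The relabelling bijection `ρ : D → {1,…,12}` (realized inside `Fin 13`, with value `0` on
the complement of `D`). -/
def rho : X24 → Fin 13 := fun x =>
  if x = 12 then 1 else if x = 8 then 2 else if x = 18 then 3 else if x = 13 then 4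
  else if x = 2 then 5 else if x = 16 then 6 else if x = 3 then 7 else if x = 23 then 8
  else if x = 1 then 9 else if x = 6 then 10 else if x = 4 then 11 else if x = 9 then 12
  else 0

/-- The generator `A = (1,6,5,4,10,9,12,7,11,3,2)` of `M₁₂` (inside `Equiv.Perm (Fin 13)`,
with `0` unused). -/
def pA : Equiv.Perm (Fin 13) := List.formPerm [1, 6, 5, 4, 10, 9, 12, 7, 11, 3, 2]

/-- The generator `B = (1,4,6,12,2)(3,11,9,7,5)` of `M₁₂`. -/
def pB : Equiv.Perm (Fin 13) := List.formPerm [1, 4, 6, 12, 2] * List.formPerm [3, 11, 9, 7, 5]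

/-- The generator `C = (1,7)(2,5)(3,12)(4,9)(6,11)(8,10)` of `M₁₂`. -/
def pC : Equiv.Perm (Fin 13) :=
  List.formPerm [1, 7] * List.formPerm [2, 5] * List.formPerm [3, 12] *
    List.formPerm [4, 9] * List.formPerm [6, 11] * List.formPerm [8, 10]

/-- The generator `D = (1,2)(3,5)(4,12)(7,11)` of `M₁₂`. -/
def pD : Equiv.Perm (Fin 13) :=
  List.formPerm [1, 2] * List.formPerm [3, 5] * List.formPerm [4, 12] * List.formPerm [7, 11]

/-- The Mathieu group `M₁₂`. -/
def M12 : Subgroup (Equiv.Perm (Fin 13)) := Subgroup.closure {pA, pB, pC, pD}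


set_option maxHeartbeats 1000000
set_option maxRecDepth 16000
set_option synthInstance.maxSize 2000
set_option synthInstance.maxHeartbeats 1000000

/-! ### Auxiliary: alternative description of the Golay code via a systematic basis -/

def Bsup : Fin 12 → Finset X24 :=
  ![{1,13,15,17,18,19,23,24},{2,13,14,15,16,17,20,23},{3,13,14,16,19,21,23,24},
    {4,13,14,18,19,20,22,23},{5,13,14,17,18,20,21,24},{6,14,15,18,19,21,22,24},
    {7,15,16,19,20,22,23,24},{8,13,15,16,18,19,20,21},{9,14,16,17,19,20,21,22},
    {10,15,17,18,20,21,22,23},{11,13,15,16,17,21,22,24},{12,14,16,17,18,22,23,24}]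

def Pidx : Fin 12 → X24 := fun i => ⟨i.val + 1, by omega⟩

def Enc (b : Fin 12 → ZMod 2) : X24 → ZMod 2 := fun x => ∑ i, b i * indvec (Bsup i) x

def GolayAltCarrier : Set (X24 → ZMod 2) := {c | ∀ x, c x = Enc (fun i => c (Pidx i)) x}

def GolayAlt : Submodule (ZMod 2) (X24 → ZMod 2) where
  carrier := GolayAltCarrier
  add_mem' := by
    intro a b ha hb
    intro x
    have h1 := ha x; have h2 := hb x
    simp only [Enc] at h1 h2 ⊢
    rw [Pi.add_apply, h1, h2]
    simp only [Pi.add_apply, add_mul, Finset.sum_add_distrib]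
  zero_mem' := by intro x; simp [Enc]
  smul_mem' := by
    intro r c hc x
    have h1 := hc x
    simp only [Enc] at h1 ⊢
    rw [Pi.smul_apply, h1, smul_eq_mul, Finset.mul_sum]
    simp only [Pi.smul_apply, smul_eq_mul, mul_assoc]

lemma mem_golayAlt {c : X24 → ZMod 2} :
    c ∈ GolayAlt ↔ ∀ x, c x = Enc (fun i => c (Pidx i)) x := Iff.rfl

def Cmb : Fin 12 → Finset (Fin 12) :=
  ![{0,3,4,5,7,8,9,11},{0,2,6,9,10,11},{0,2,8,9},{2,3,6},{0,5,6,7,8},{1,2,3,4,8,9,10,11},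
    {3,4,6,7,8,9,10,11},{3,4,5,6,9,11},{0,2,4,6,10,11},{0,4,5,6,7,9},{3,5,7,8,10},{0,3,4,8,9,10}]

lemma bsup_comb : ∀ (i : Fin 12) (x : X24),
    indvec (Bsup i) x = ∑ j ∈ Cmb i, indvec (golayGen j) x := by decide

lemma bsup_mem_golay (i : Fin 12) : indvec (Bsup i) ∈ Golay := by
  have : indvec (Bsup i) = ∑ j ∈ Cmb i, indvec (golayGen j) := by
    funext x; rw [bsup_comb i x]; simp [Finset.sum_apply]
  rw [this]
  exact Submodule.sum_mem _ fun j _ => Submodule.subset_span ⟨j, rfl⟩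

lemma alt_le_golay : GolayAlt ≤ Golay := by
  intro c hc
  rw [mem_golayAlt] at hc
  have : c = ∑ i, c (Pidx i) • indvec (Bsup i) := by
    funext x
    rw [hc x]
    simp [Enc, Finset.sum_apply, smul_eq_mul]
  rw [this]
  exact Submodule.sum_mem _ fun i _ => Submodule.smul_mem _ _ (bsup_mem_golay i)

lemma golay_le_alt : Golay ≤ GolayAlt := by
  rw [Golay, Submodule.span_le]
  rintro _ ⟨i, rfl⟩
  rw [SetLike.mem_coe, mem_golayAlt]
  revert i
  decide

lemma golay_eq_alt : Golay = GolayAlt := le_antisymm golay_le_alt alt_le_golay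

lemma golay_of_alt {c : X24 → ZMod 2} (h : ∀ x, c x = Enc (fun i => c (Pidx i)) x) :
    c ∈ Golay := alt_le_golay (mem_golayAlt.mpr h)

lemma golay_to_alt {c : X24 → ZMod 2} (h : c ∈ Golay) :
    ∀ x, c x = Enc (fun i => c (Pidx i)) x := mem_golayAlt.mp (golay_le_alt h)
/-! ### Minimum weight 8 of the Golay code, via a fast kernel computation -/

def combo (n : Nat) : Nat :=
  (if n.testBit 0 then 26124290 else 0) ^^^ ((if n.testBit 1 then 9691140 else 0) ^^^
  ((if n.testBit 2 then 27877384 else 0) ^^^ ((if n.testBit 3 then 14442512 else 0) ^^^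
  ((if n.testBit 4 then 20340768 else 0) ^^^ ((if n.testBit 5 then 23904320 else 0) ^^^
  ((if n.testBit 6 then 31031424 else 0) ^^^ ((if n.testBit 7 then 4038912 else 0) ^^^
  ((if n.testBit 8 then 8077824 else 0) ^^^ ((if n.testBit 9 then 16155648 else 0) ^^^
  ((if n.testBit 10 then 23308288 else 0) ^^^ (if n.testBit 11 then 29839360 else 0)))))))))))

def wtn (v : Nat) : Nat := ∑ i ∈ Finset.range 25, if v.testBit i then 1 else 0

def Pleaf (n : Nat) : Bool := (combo n == 0) || (8 ≤ wtn (combo n))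

def chk : Nat → Nat → Bool
  | 0, lo => Pleaf lo
  | f+1, lo => chk f (2*lo) && chk f (2*lo+1)

set_option maxHeartbeats 1000000 in
lemma chk_true : chk 12 0 = true := by decide

lemma chk_sound : ∀ f lo, chk f lo = true → ∀ m, m < 2^f → Pleaf (2^f * lo + m) = true := by
  intro f
  induction f with
  | zero =>
    intro lo h m hm
    interval_cases m
    simpa [chk] using h
  | succ f ih =>
    intro lo h m hm
    rw [chk, Bool.and_eq_true] at h
    rcases Nat.lt_or_ge m (2^f) with hl | hg
    · have := ih _ h.1 m hl
      rw [show 2^f * (2*lo) + m = 2^(f+1) * lo + m by ring] at this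
      exact this
    · have hm2 : m - 2^f < 2^f := by
        have h2 : (2:Nat)^(f+1) = 2^f + 2^f := by ring
        omega
    
      have := ih _ h.2 (m - 2^f) hm2
      rw [show 2^f * (2*lo+1) + (m - 2^f) = 2^(f+1) * lo + m by
        rw [Nat.mul_add, mul_one, show 2^f*(2*lo) = 2^(f+1)*lo by ring]
        omega] at this
      exact this

lemma pleaf_all : ∀ n < 4096, Pleaf n = true := by
  intro n hn
  have := chk_sound 12 0 chk_true n (by norm_num [hn])
  simpa using this

/-- Map a bitmask to a coefficient vector. -/
def bOf (n : Nat) : Fin 12 → ZMod 2 := fun i => if n.testBit i.val then 1 else 0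

def ofb (b : Bool) : ZMod 2 := if b then 1 else 0

def maskL : List Nat :=
  [26124290, 9691140, 27877384, 14442512, 20340768, 23904320,
   31031424, 4038912, 8077824, 16155648, 23308288, 29839360]

def BsupL : List (Finset X24) :=
  [{1,13,15,17,18,19,23,24},{2,13,14,15,16,17,20,23},{3,13,14,16,19,21,23,24},
   {4,13,14,18,19,20,22,23},{5,13,14,17,18,20,21,24},{6,14,15,18,19,21,22,24},
   {7,15,16,19,20,22,23,24},{8,13,15,16,18,19,20,21},{9,14,16,17,19,20,21,22},
   {10,15,17,18,20,21,22,23},{11,13,15,16,17,21,22,24},{12,14,16,17,18,22,23,24}]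

def comboL : List Nat → Nat → Nat → Nat
  | [], _, _ => 0
  | [m], n, k => if n.testBit k then m else 0
  | m :: t, n, k => (if n.testBit k then m else 0) ^^^ comboL t n (k+1)

def encL : List (Finset X24) → Nat → Nat → X24 → ZMod 2
  | [], _, _, _ => 0
  | [S], n, k, x => ofb (n.testBit k) * indvec S x
  | S :: t, n, k, x => ofb (n.testBit k) * indvec S x + encL t n (k+1) x

lemma ofb_xor (a b : Bool) : ofb (a.xor b) = ofb a + ofb b := by cases a <;> cases b <;> decide

def RSm (S : Finset X24) (m : Nat) : Prop := ∀ x : X24, indvec S x = ofb (m.testBit x.val)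

lemma encL_eq : ∀ (l : List (Finset X24)) (ml : List Nat), List.Forall₂ RSm l ml →
    ∀ n k x, encL l n k x = ofb ((comboL ml n k).testBit x.val) := by
  intro l
  induction l with
  | nil =>
    intro ml h n k x
    cases h
    simp [encL, comboL, Nat.zero_testBit, ofb]
  | cons S t ih =>
    intro ml h n k x
    rcases h with _ | ⟨hSm, htail⟩
    rename_i m mt
    cases t with
    | nil =>
      cases htail
      show ofb (n.testBit k) * indvec S x = _
      rw [hSm x]
      by_cases h : n.testBit k <;> simp [comboL, ofb, h, Nat.zero_testBit]
    | cons S' t' =>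
      rcases htail with _ | ⟨hSm', htail'⟩
      rename_i m' mt'
      show ofb (n.testBit k) * indvec S x + encL (S' :: t') n (k+1) x = _
      rw [ih _ (List.Forall₂.cons hSm' htail') n (k+1) x, hSm x]
      show _ = ofb ((((if n.testBit k then m else 0)) ^^^ comboL (m' :: mt') n (k+1)).testBit x.val)
      rw [Nat.testBit_xor, ofb_xor]
      by_cases h : n.testBit k <;> simp [ofb, h, Nat.zero_testBit]

lemma corr_concrete : List.Forall₂ RSm BsupL maskL := by
  unfold BsupL maskL
  repeat' constructor
  all_goals (intro x; revert x; decide)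

lemma enc_eq_encL (n : Nat) (x : X24) : Enc (bOf n) x = encL BsupL n 0 x := by
  rw [Enc, Fin.sum_univ_succ, Fin.sum_univ_succ, Fin.sum_univ_succ, Fin.sum_univ_succ,
    Fin.sum_univ_succ, Fin.sum_univ_succ, Fin.sum_univ_succ, Fin.sum_univ_succ,
    Fin.sum_univ_succ, Fin.sum_univ_succ, Fin.sum_univ_succ, Fin.sum_univ_one]
  rfl

lemma combo_eq_comboL (n : Nat) : combo n = comboL maskL n 0 := rfl

lemma enc_combo (n : Nat) (x : X24) : Enc (bOf n) x = ofb ((combo n).testBit x.val) := by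
  rw [enc_eq_encL, combo_eq_comboL, encL_eq BsupL maskL corr_concrete n 0 x]

/-- The weight of a vector. -/
def wt (c : X24 → ZMod 2) : Nat := (Finset.univ.filter fun x => c x ≠ 0).card

lemma wt_enc (n : Nat) : wt (Enc (bOf n)) = wtn (combo n) := by
  unfold wt wtn
  rw [Finset.card_filter]
  rw [← Fin.sum_univ_eq_sum_range (fun i => if (combo n).testBit i then 1 else 0) 25]
  apply Finset.sum_congr rfl
  intro x _
  rw [enc_combo n x]
  cases h : (combo n).testBit x.val <;> simp [ofb, h]

lemma bOf_surj (b : Fin 12 → ZMod 2) : ∃ n : Fin 4096, bOf n.val = b := by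
  have hinj : Function.Injective (fun n : Fin 4096 => bOf n.val) := by
    intro n m h
    have hb : ∀ i : Nat, n.val.testBit i = m.val.testBit i := by
      intro i
      by_cases hi : i < 12
      · have := congrFun h ⟨i, hi⟩
        simp only [bOf] at this
        by_cases h1 : n.val.testBit i <;> by_cases h2 : m.val.testBit i <;>
          simp [h1, h2] at this ⊢
      · have h1 : n.val < 2^i := lt_of_lt_of_le n.isLt (by
          calc (4096:Nat) = 2^12 := by norm_num
          _ ≤ 2^i := Nat.pow_le_pow_right (by norm_num) (by omega))
        have h2 : m.val < 2^i := lt_of_lt_of_le m.isLt (by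
          calc (4096:Nat) = 2^12 := by norm_num
          _ ≤ 2^i := Nat.pow_le_pow_right (by norm_num) (by omega))
        rw [Nat.testBit_lt_two_pow h1, Nat.testBit_lt_two_pow h2]
    exact Fin.ext (Nat.eq_of_testBit_eq hb)
  have hcard : Fintype.card (Fin 4096) = Fintype.card (Fin 12 → ZMod 2) := by
    rw [Fintype.card_fun, ZMod.card, Fintype.card_fin, Fintype.card_fin]; norm_num
  have hbij := (Fintype.bijective_iff_injective_and_card _).mpr ⟨hinj, hcard⟩
  exact hbij.2 b

lemma golay_min_wt {c : X24 → ZMod 2} (hc : c ∈ Golay) (hne : c ≠ 0) : 8 ≤ wt c := by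
  obtain ⟨n, hn⟩ := bOf_surj (fun i => c (Pidx i))
  have hcx : ∀ x, c x = Enc (bOf n.val) x := by
    intro x; rw [hn]; exact golay_to_alt hc x
  have hfun : c = Enc (bOf n.val) := funext hcx
  have hp := pleaf_all n.val n.isLt
  rw [Pleaf, Bool.or_eq_true] at hp
  rcases hp with hp | hp
  · exfalso
    apply hne
    funext x
    have hz : combo n.val = 0 := by simpa using hp
    rw [hcx x, enc_combo, hz]
    simp [ofb, Nat.zero_testBit]
  · rw [hfun, wt_enc]
    exact of_decide_eq_true hp
/-! ### M24 helper lemmas -/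

lemma golay_comp_mem {σ : Equiv.Perm X24} (h1 : ∀ i, indvec (golayGen i) ∘ σ ∈ Golay) :
    ∀ c ∈ Golay, c ∘ σ ∈ Golay := by
  intro c hc
  induction hc using Submodule.span_induction with
  | mem c hcm => obtain ⟨i, rfl⟩ := hcm; exact h1 i
  | zero => exact Submodule.zero_mem _
  | add a b _ _ ha hb => exact Submodule.add_mem _ ha hb
  | smul r a _ ha => exact Submodule.smul_mem _ r ha

lemma mem_M24_of {σ : Equiv.Perm X24} (h1 : ∀ i, indvec (golayGen i) ∘ σ ∈ Golay)
    (h2 : ∀ i, indvec (golayGen i) ∘ ⇑σ⁻¹ ∈ Golay) : σ ∈ M24 := by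
  intro c
  constructor
  · intro hc; exact golay_comp_mem h1 c hc
  · intro hc
    have := golay_comp_mem h2 _ hc
    have he : (c ∘ ⇑σ) ∘ ⇑σ⁻¹ = c := by
      funext x; simp
    rwa [he] at this

lemma golay_zero_coord : ∀ c ∈ Golay, c 0 = 0 := by
  intro c hc
  induction hc using Submodule.span_induction with
  | mem c hcm => obtain ⟨i, rfl⟩ := hcm; revert i; decide
  | zero => rfl
  | add a b _ _ ha hb => show a 0 + b 0 = 0; rw [ha, hb, add_zero]
  | smul r a _ ha => show r * a 0 = 0; rw [ha, mul_zero]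

lemma sigma_zero {σ : Equiv.Perm X24} (hσ : σ ∈ M24) : σ 0 = 0 := by
  have hz : ∀ i : Fin 12, σ 0 ∉ golayGen i := by
    intro i hmem
    have h1 : indvec (golayGen i) ∘ σ ∈ Golay := (hσ (indvec (golayGen i))).mp
      (Submodule.subset_span ⟨i, rfl⟩)
    have h2 := golay_zero_coord _ h1
    have h3 : indvec (golayGen i) (σ 0) = 0 := h2
    rw [indvec, if_pos hmem] at h3
    exact one_ne_zero h3
  exact (by decide : ∀ w : X24, (∀ i : Fin 12, w ∉ golayGen i) → w = 0) _ hz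

/-- The complement of the dodecad (within coordinates 1..24). -/
def DsetC : Finset X24 := {5, 7, 10, 11, 14, 15, 17, 19, 20, 21, 22, 24}

lemma sideC {σ : Equiv.Perm X24} (hσ : σ ∈ M24) (hD : ∀ z, z ∈ Dset ↔ σ z ∈ Dset) :
    ∀ z, z ∈ DsetC → σ z ∈ DsetC := by
  intro z hz
  have h0 : σ 0 = 0 := sigma_zero hσ
  have hnz : σ z ≠ 0 := by
    intro h
    have := σ.injective (h.trans h0.symm)
    rw [this] at hz
    exact absurd hz (by decide)
  have hnD : σ z ∉ Dset := by
    intro h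
    have h2 := (hD z).mpr h
    exact (by decide : ∀ w : X24, w ∈ Dset → w ∈ DsetC → False) z h2 hz
  exact (by decide : ∀ w : X24, w ≠ 0 → w ∉ Dset → w ∈ DsetC) _ hnz hnD

/-- Octad stabilization: if an octad has at least 5 points whose images under σ are known to
lie in the octad, then σ stabilizes the octad. -/
lemma octStab {σ : Equiv.Perm X24} (hσ : σ ∈ M24) (O K : Finset X24)
    (hmem : indvec O ∈ Golay) (hcard : O.card = 8)
    (hKO : K ⊆ O) (hK5 : 5 ≤ K.card) (hKim : ∀ z ∈ K, σ z ∈ O) :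
    ∀ y, y ∈ O ↔ σ y ∈ O := by
  set c := indvec O with hc
  have hcomp : c ∘ σ ∈ Golay := (hσ c).mp hmem
  set d : X24 → ZMod 2 := c ∘ σ + c with hd
  have hdG : d ∈ Golay := Submodule.add_mem _ hcomp hmem
  set O' : Finset X24 := O.image ⇑σ⁻¹ with hO'
  have hO'card : O'.card = 8 := by rw [hO', Finset.card_image_of_injective _ σ⁻¹.injective, hcard]
  have hO'mem : ∀ y, y ∈ O' ↔ σ y ∈ O := by
    intro y
    rw [hO', Finset.mem_image]
    constructor
    · rintro ⟨a, ha, rfl⟩; simpa using ha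
    · intro h; exact ⟨σ y, h, by simp⟩
  have hdz : d = 0 := by
    by_contra hne
    have h8 := golay_min_wt hdG hne
    have hKO' : K ⊆ O ∩ O' := by
      intro z hz
      rw [Finset.mem_inter, hO'mem]
      exact ⟨hKO hz, hKim z hz⟩
    have hsupp : Finset.univ.filter (fun x => d x ≠ 0) ⊆ (O ∪ O') \ K := by
      intro y hy
      rw [Finset.mem_filter] at hy
      have hy2 := hy.2
      rw [Finset.mem_sdiff, Finset.mem_union]
      constructor
      · by_contra hno
        push_neg at hno
        have h1 : y ∉ O := hno.1
        have h2 : σ y ∉ O := fun h => hno.2 ((hO'mem y).mpr h)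
        apply hy2
        show c (σ y) + c y = 0
        rw [hc]
        simp [indvec, h1, h2]
      · intro hyK
        apply hy2
        show c (σ y) + c y = 0
        have h1 : y ∈ O := hKO hyK
        have h2 : σ y ∈ O := hKim y hyK
        rw [hc]
        simp only [indvec, if_pos h1, if_pos h2]
        decide
    have hwt : wt d ≤ 6 := by
      have hc1 : wt d ≤ ((O ∪ O') \ K).card := Finset.card_le_card hsupp
      have hKsub : K ⊆ O ∪ O' := hKO'.trans (Finset.inter_subset_left.trans Finset.subset_union_left)
      have hc2 : ((O ∪ O') \ K).card = (O ∪ O').card - K.card := Finset.card_sdiff_of_subset hKsub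
      have hc3 : (O ∪ O').card + (O ∩ O').card = O.card + O'.card := Finset.card_union_add_card_inter O O'
      have hc4 : 5 ≤ (O ∩ O').card := le_trans hK5 (Finset.card_le_card hKO')
      omega
    omega
  intro y
  have hy : c (σ y) + c y = 0 := congrFun hdz y
  constructor
  · intro h1
    by_contra h2
    rw [hc] at hy
    simp [indvec, h1, h2] at hy
  · intro h2
    by_contra h1
    rw [hc] at hy
    simp [indvec, h1, h2] at hy
lemma pinSharp {σ : Equiv.Perm X24} (hσ : σ ∈ M24) (hD : ∀ z, z ∈ Dset ↔ σ z ∈ Dset)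
    (e12 : σ 12 = 12) (e8 : σ 8 = 8) (e18 : σ 18 = 18) (e13 : σ 13 = 13) (e2 : σ 2 = 2) :
    ∀ z ∈ Dset, σ z = z := by
  have s1 : ∀ y, y ∈ ({2,5,8,9,12,13,18,21} : Finset X24) ↔ σ y ∈ ({2,5,8,9,12,13,18,21} : Finset X24) :=
    octStab hσ ({2,5,8,9,12,13,18,21} : Finset X24) ({2,8,12,13,18} : Finset X24) (golay_of_alt (by decide)) (by decide) (by decide) (by decide)
      (by intro z hz
          rcases (by decide : ∀ w : X24, w ∈ ({2,8,12,13,18} : Finset X24) → w = 2 ∨ w = 8 ∨ w = 12 ∨ w = 13 ∨ w = 18) z hz with rfl|rfl|rfl|rfl|rfl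
          · rw [e2]; decide
          · rw [e8]; decide
          · rw [e12]; decide
          · rw [e13]; decide
          · rw [e18]; decide
          )
  have m9_1 : σ 9 ∈ ({2,5,8,9,12,13,18,21} : Finset X24) := (s1 9).mp (by decide)
  have m9_2 : σ 9 ∈ Dset := (hD 9).mp (by decide)
  have m9_3 : σ 9 ≠ 2 := fun hh => absurd (σ.injective (hh.trans e2.symm)) (by decide)
  have m9_4 : σ 9 ≠ 8 := fun hh => absurd (σ.injective (hh.trans e8.symm)) (by decide)
  have m9_5 : σ 9 ≠ 12 := fun hh => absurd (σ.injective (hh.trans e12.symm)) (by decide)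
  have m9_6 : σ 9 ≠ 13 := fun hh => absurd (σ.injective (hh.trans e13.symm)) (by decide)
  have m9_7 : σ 9 ≠ 18 := fun hh => absurd (σ.injective (hh.trans e18.symm)) (by decide)
  have e9 : σ 9 = 9 := (by decide : ∀ w : X24, w ∈ ({2,5,8,9,12,13,18,21} : Finset X24) → w ∈ Dset → w ≠ 2 → w ≠ 8 → w ≠ 12 → w ≠ 13 → w ≠ 18 → w = 9) _ m9_1 m9_2 m9_3 m9_4 m9_5 m9_6 m9_7
  have m5_1 : σ 5 ∈ ({2,5,8,9,12,13,18,21} : Finset X24) := (s1 5).mp (by decide)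
  have m5_2 : σ 5 ∈ DsetC := sideC hσ hD 5 (by decide)
  rcases (by decide : ∀ w : X24, w ∈ ({2,5,8,9,12,13,18,21} : Finset X24) → w ∈ DsetC → (w = 5 ∨ w = 21)) _ m5_1 m5_2 with e5|e5
  · -- case σ 5 = 5
    have m21_1 : σ 21 ∈ ({2,5,8,9,12,13,18,21} : Finset X24) := (s1 21).mp (by decide)
    have m21_2 : σ 21 ∈ DsetC := sideC hσ hD 21 (by decide)
    have m21_3 : σ 21 ≠ 5 := fun hh => absurd (σ.injective (hh.trans e5.symm)) (by decide)
    have e21 : σ 21 = 21 := (by decide : ∀ w : X24, w ∈ ({2,5,8,9,12,13,18,21} : Finset X24) → w ∈ DsetC → w ≠ 5 → w = 21) _ m21_1 m21_2 m21_3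
    have m1_1 : σ 1 ∈ Dset := (hD 1).mp (by decide)
    have m1_2 : σ 1 ∉ ({2,5,8,9,12,13,18,21} : Finset X24) := fun hh => (by decide : (1:X24) ∈ ({2,5,8,9,12,13,18,21} : Finset X24) → False) ((s1 1).mpr hh)
    rcases (by decide : ∀ w : X24, w ∈ Dset → w ∉ ({2,5,8,9,12,13,18,21} : Finset X24) → (w = 1 ∨ w = 3 ∨ w = 4 ∨ w = 6 ∨ w = 16 ∨ w = 23)) _ m1_1 m1_2 with e1|e1|e1|e1|e1|e1
    · -- case σ 1 = 1
      have s2 : ∀ y, y ∈ ({1,2,3,4,5,8,11,13} : Finset X24) ↔ σ y ∈ ({1,2,3,4,5,8,11,13} : Finset X24) :=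
        octStab hσ ({1,2,3,4,5,8,11,13} : Finset X24) ({1,2,5,8,13} : Finset X24) (golay_of_alt (by decide)) (by decide) (by decide) (by decide)
          (by intro z hz
              rcases (by decide : ∀ w : X24, w ∈ ({1,2,5,8,13} : Finset X24) → w = 1 ∨ w = 2 ∨ w = 5 ∨ w = 8 ∨ w = 13) z hz with rfl|rfl|rfl|rfl|rfl
              · rw [e1]; decide
              · rw [e2]; decide
              · rw [e5]; decide
              · rw [e8]; decide
              · rw [e13]; decide
              )
      have m3_1 : σ 3 ∈ ({1,2,3,4,5,8,11,13} : Finset X24) := (s2 3).mp (by decide)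
      have s3 : ∀ y, y ∈ ({1,2,3,5,7,9,15,21} : Finset X24) ↔ σ y ∈ ({1,2,3,5,7,9,15,21} : Finset X24) :=
        octStab hσ ({1,2,3,5,7,9,15,21} : Finset X24) ({1,2,5,9,21} : Finset X24) (golay_of_alt (by decide)) (by decide) (by decide) (by decide)
          (by intro z hz
              rcases (by decide : ∀ w : X24, w ∈ ({1,2,5,9,21} : Finset X24) → w = 1 ∨ w = 2 ∨ w = 5 ∨ w = 9 ∨ w = 21) z hz with rfl|rfl|rfl|rfl|rfl
              · rw [e1]; decide
              · rw [e2]; decide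
              · rw [e5]; decide
              · rw [e9]; decide
              · rw [e21]; decide
              )
      have m3_2 : σ 3 ∈ ({1,2,3,5,7,9,15,21} : Finset X24) := (s3 3).mp (by decide)
      have s4 : ∀ y, y ∈ ({1,2,3,6,8,12,17,21} : Finset X24) ↔ σ y ∈ ({1,2,3,6,8,12,17,21} : Finset X24) :=
        octStab hσ ({1,2,3,6,8,12,17,21} : Finset X24) ({1,2,8,12,21} : Finset X24) (golay_of_alt (by decide)) (by decide) (by decide) (by decide)
          (by intro z hz
              rcases (by decide : ∀ w : X24, w ∈ ({1,2,8,12,21} : Finset X24) → w = 1 ∨ w = 2 ∨ w = 8 ∨ w = 12 ∨ w = 21) z hz with rfl|rfl|rfl|rfl|rfl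
              · rw [e1]; decide
              · rw [e2]; decide
              · rw [e8]; decide
              · rw [e12]; decide
              · rw [e21]; decide
              )
      have m3_3 : σ 3 ∈ ({1,2,3,6,8,12,17,21} : Finset X24) := (s4 3).mp (by decide)
      have s5 : ∀ y, y ∈ ({1,3,4,9,11,12,18,21} : Finset X24) ↔ σ y ∈ ({1,3,4,9,11,12,18,21} : Finset X24) :=
        octStab hσ ({1,3,4,9,11,12,18,21} : Finset X24) ({1,9,12,18,21} : Finset X24) (golay_of_alt (by decide)) (by decide) (by decide) (by decide)
          (by intro z hz
              rcases (by decide : ∀ w : X24, w ∈ ({1,9,12,18,21} : Finset X24) → w = 1 ∨ w = 9 ∨ w = 12 ∨ w = 18 ∨ w = 21) z hz with rfl|rfl|rfl|rfl|rfl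
              · rw [e1]; decide
              · rw [e9]; decide
              · rw [e12]; decide
              · rw [e18]; decide
              · rw [e21]; decide
              )
      have m3_4 : σ 3 ∈ ({1,3,4,9,11,12,18,21} : Finset X24) := (s5 3).mp (by decide)
      have s6 : ∀ y, y ∈ ({1,2,4,5,9,18,19,23} : Finset X24) ↔ σ y ∈ ({1,2,4,5,9,18,19,23} : Finset X24) :=
        octStab hσ ({1,2,4,5,9,18,19,23} : Finset X24) ({1,2,5,9,18} : Finset X24) (golay_of_alt (by decide)) (by decide) (by decide) (by decide)
          (by intro z hz
              rcases (by decide : ∀ w : X24, w ∈ ({1,2,5,9,18} : Finset X24) → w = 1 ∨ w = 2 ∨ w = 5 ∨ w = 9 ∨ w = 18) z hz with rfl|rfl|rfl|rfl|rfl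
              · rw [e1]; decide
              · rw [e2]; decide
              · rw [e5]; decide
              · rw [e9]; decide
              · rw [e18]; decide
              )
      have m3_5 : σ 3 ∉ ({1,2,4,5,9,18,19,23} : Finset X24) := fun hh => (by decide : (3:X24) ∈ ({1,2,4,5,9,18,19,23} : Finset X24) → False) ((s6 3).mpr hh)
      have e3 : σ 3 = 3 := (by decide : ∀ w : X24, w ∈ ({1,2,3,4,5,8,11,13} : Finset X24) → w ∈ ({1,2,3,5,7,9,15,21} : Finset X24) → w ∈ ({1,2,3,6,8,12,17,21} : Finset X24) → w ∈ ({1,3,4,9,11,12,18,21} : Finset X24) → w ∉ ({1,2,4,5,9,18,19,23} : Finset X24) → w = 3) _ m3_1 m3_2 m3_3 m3_4 m3_5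
      have m4_1 : σ 4 ∈ ({1,2,3,4,5,8,11,13} : Finset X24) := (s2 4).mp (by decide)
      have m4_2 : σ 4 ∈ ({1,2,4,5,9,18,19,23} : Finset X24) := (s6 4).mp (by decide)
      have s7 : ∀ y, y ∈ ({1,2,4,6,9,10,13,21} : Finset X24) ↔ σ y ∈ ({1,2,4,6,9,10,13,21} : Finset X24) :=
        octStab hσ ({1,2,4,6,9,10,13,21} : Finset X24) ({1,2,9,13,21} : Finset X24) (golay_of_alt (by decide)) (by decide) (by decide) (by decide)
          (by intro z hz
              rcases (by decide : ∀ w : X24, w ∈ ({1,2,9,13,21} : Finset X24) → w = 1 ∨ w = 2 ∨ w = 9 ∨ w = 13 ∨ w = 21) z hz with rfl|rfl|rfl|rfl|rfl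
              · rw [e1]; decide
              · rw [e2]; decide
              · rw [e9]; decide
              · rw [e13]; decide
              · rw [e21]; decide
              )
      have m4_3 : σ 4 ∈ ({1,2,4,6,9,10,13,21} : Finset X24) := (s7 4).mp (by decide)
      have m4_4 : σ 4 ∈ ({1,3,4,9,11,12,18,21} : Finset X24) := (s5 4).mp (by decide)
      have s8 : ∀ y, y ∈ ({2,3,4,5,6,9,12,14} : Finset X24) ↔ σ y ∈ ({2,3,4,5,6,9,12,14} : Finset X24) :=
        octStab hσ ({2,3,4,5,6,9,12,14} : Finset X24) ({2,3,5,9,12} : Finset X24) (golay_of_alt (by decide)) (by decide) (by decide) (by decide)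
          (by intro z hz
              rcases (by decide : ∀ w : X24, w ∈ ({2,3,5,9,12} : Finset X24) → w = 2 ∨ w = 3 ∨ w = 5 ∨ w = 9 ∨ w = 12) z hz with rfl|rfl|rfl|rfl|rfl
              · rw [e2]; decide
              · rw [e3]; decide
              · rw [e5]; decide
              · rw [e9]; decide
              · rw [e12]; decide
              )
      have m4_5 : σ 4 ∈ ({2,3,4,5,6,9,12,14} : Finset X24) := (s8 4).mp (by decide)
      have e4 : σ 4 = 4 := (by decide : ∀ w : X24, w ∈ ({1,2,3,4,5,8,11,13} : Finset X24) → w ∈ ({1,2,4,5,9,18,19,23} : Finset X24) → w ∈ ({1,2,4,6,9,10,13,21} : Finset X24) → w ∈ ({1,3,4,9,11,12,18,21} : Finset X24) → w ∈ ({2,3,4,5,6,9,12,14} : Finset X24) → w = 4) _ m4_1 m4_2 m4_3 m4_4 m4_5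
      have s9 : ∀ y, y ∈ ({1,2,3,4,6,15,18,24} : Finset X24) ↔ σ y ∈ ({1,2,3,4,6,15,18,24} : Finset X24) :=
        octStab hσ ({1,2,3,4,6,15,18,24} : Finset X24) ({1,2,3,4,18} : Finset X24) (golay_of_alt (by decide)) (by decide) (by decide) (by decide)
          (by intro z hz
              rcases (by decide : ∀ w : X24, w ∈ ({1,2,3,4,18} : Finset X24) → w = 1 ∨ w = 2 ∨ w = 3 ∨ w = 4 ∨ w = 18) z hz with rfl|rfl|rfl|rfl|rfl
              · rw [e1]; decide
              · rw [e2]; decide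
              · rw [e3]; decide
              · rw [e4]; decide
              · rw [e18]; decide
              )
      have m6_1 : σ 6 ∈ ({1,2,3,4,6,15,18,24} : Finset X24) := (s9 6).mp (by decide)
      have m6_2 : σ 6 ∈ ({1,2,3,6,8,12,17,21} : Finset X24) := (s4 6).mp (by decide)
      have m6_3 : σ 6 ∈ ({1,2,4,6,9,10,13,21} : Finset X24) := (s7 6).mp (by decide)
      have s10 : ∀ y, y ∈ ({1,3,4,5,6,16,21,23} : Finset X24) ↔ σ y ∈ ({1,3,4,5,6,16,21,23} : Finset X24) :=
        octStab hσ ({1,3,4,5,6,16,21,23} : Finset X24) ({1,3,4,5,21} : Finset X24) (golay_of_alt (by decide)) (by decide) (by decide) (by decide)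
          (by intro z hz
              rcases (by decide : ∀ w : X24, w ∈ ({1,3,4,5,21} : Finset X24) → w = 1 ∨ w = 3 ∨ w = 4 ∨ w = 5 ∨ w = 21) z hz with rfl|rfl|rfl|rfl|rfl
              · rw [e1]; decide
              · rw [e3]; decide
              · rw [e4]; decide
              · rw [e5]; decide
              · rw [e21]; decide
              )
      have m6_4 : σ 6 ∈ ({1,3,4,5,6,16,21,23} : Finset X24) := (s10 6).mp (by decide)
      have m6_5 : σ 6 ∈ ({2,3,4,5,6,9,12,14} : Finset X24) := (s8 6).mp (by decide)
      have e6 : σ 6 = 6 := (by decide : ∀ w : X24, w ∈ ({1,2,3,4,6,15,18,24} : Finset X24) → w ∈ ({1,2,3,6,8,12,17,21} : Finset X24) → w ∈ ({1,2,4,6,9,10,13,21} : Finset X24) → w ∈ ({1,3,4,5,6,16,21,23} : Finset X24) → w ∈ ({2,3,4,5,6,9,12,14} : Finset X24) → w = 6) _ m6_1 m6_2 m6_3 m6_4 m6_5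
      have s11 : ∀ y, y ∈ ({1,2,3,4,7,10,12,23} : Finset X24) ↔ σ y ∈ ({1,2,3,4,7,10,12,23} : Finset X24) :=
        octStab hσ ({1,2,3,4,7,10,12,23} : Finset X24) ({1,2,3,4,12} : Finset X24) (golay_of_alt (by decide)) (by decide) (by decide) (by decide)
          (by intro z hz
              rcases (by decide : ∀ w : X24, w ∈ ({1,2,3,4,12} : Finset X24) → w = 1 ∨ w = 2 ∨ w = 3 ∨ w = 4 ∨ w = 12) z hz with rfl|rfl|rfl|rfl|rfl
              · rw [e1]; decide
              · rw [e2]; decide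
              · rw [e3]; decide
              · rw [e4]; decide
              · rw [e12]; decide
              )
      have m7_1 : σ 7 ∈ ({1,2,3,4,7,10,12,23} : Finset X24) := (s11 7).mp (by decide)
      have m7_2 : σ 7 ∈ ({1,2,3,5,7,9,15,21} : Finset X24) := (s3 7).mp (by decide)
      have s12 : ∀ y, y ∈ ({1,2,4,5,6,7,17,22} : Finset X24) ↔ σ y ∈ ({1,2,4,5,6,7,17,22} : Finset X24) :=
        octStab hσ ({1,2,4,5,6,7,17,22} : Finset X24) ({1,2,4,5,6} : Finset X24) (golay_of_alt (by decide)) (by decide) (by decide) (by decide)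
          (by intro z hz
              rcases (by decide : ∀ w : X24, w ∈ ({1,2,4,5,6} : Finset X24) → w = 1 ∨ w = 2 ∨ w = 4 ∨ w = 5 ∨ w = 6) z hz with rfl|rfl|rfl|rfl|rfl
              · rw [e1]; decide
              · rw [e2]; decide
              · rw [e4]; decide
              · rw [e5]; decide
              · rw [e6]; decide
              )
      have m7_3 : σ 7 ∈ ({1,2,4,5,6,7,17,22} : Finset X24) := (s12 7).mp (by decide)
      have s13 : ∀ y, y ∈ ({1,3,4,5,7,14,18,20} : Finset X24) ↔ σ y ∈ ({1,3,4,5,7,14,18,20} : Finset X24) :=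
        octStab hσ ({1,3,4,5,7,14,18,20} : Finset X24) ({1,3,4,5,18} : Finset X24) (golay_of_alt (by decide)) (by decide) (by decide) (by decide)
          (by intro z hz
              rcases (by decide : ∀ w : X24, w ∈ ({1,3,4,5,18} : Finset X24) → w = 1 ∨ w = 3 ∨ w = 4 ∨ w = 5 ∨ w = 18) z hz with rfl|rfl|rfl|rfl|rfl
              · rw [e1]; decide
              · rw [e3]; decide
              · rw [e4]; decide
              · rw [e5]; decide
              · rw [e18]; decide
              )
      have m7_4 : σ 7 ∈ ({1,3,4,5,7,14,18,20} : Finset X24) := (s13 7).mp (by decide)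
      have s14 : ∀ y, y ∈ ({2,3,4,6,7,11,20,21} : Finset X24) ↔ σ y ∈ ({2,3,4,6,7,11,20,21} : Finset X24) :=
        octStab hσ ({2,3,4,6,7,11,20,21} : Finset X24) ({2,3,4,6,21} : Finset X24) (golay_of_alt (by decide)) (by decide) (by decide) (by decide)
          (by intro z hz
              rcases (by decide : ∀ w : X24, w ∈ ({2,3,4,6,21} : Finset X24) → w = 2 ∨ w = 3 ∨ w = 4 ∨ w = 6 ∨ w = 21) z hz with rfl|rfl|rfl|rfl|rfl
              · rw [e2]; decide
              · rw [e3]; decide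
              · rw [e4]; decide
              · rw [e6]; decide
              · rw [e21]; decide
              )
      have m7_5 : σ 7 ∈ ({2,3,4,6,7,11,20,21} : Finset X24) := (s14 7).mp (by decide)
      have e7 : σ 7 = 7 := (by decide : ∀ w : X24, w ∈ ({1,2,3,4,7,10,12,23} : Finset X24) → w ∈ ({1,2,3,5,7,9,15,21} : Finset X24) → w ∈ ({1,2,4,5,6,7,17,22} : Finset X24) → w ∈ ({1,3,4,5,7,14,18,20} : Finset X24) → w ∈ ({2,3,4,6,7,11,20,21} : Finset X24) → w = 7) _ m7_1 m7_2 m7_3 m7_4 m7_5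
      have m10_1 : σ 10 ∈ ({1,2,3,4,7,10,12,23} : Finset X24) := (s11 10).mp (by decide)
      have s15 : ∀ y, y ∈ ({1,2,3,5,6,10,19,20} : Finset X24) ↔ σ y ∈ ({1,2,3,5,6,10,19,20} : Finset X24) :=
        octStab hσ ({1,2,3,5,6,10,19,20} : Finset X24) ({1,2,3,5,6} : Finset X24) (golay_of_alt (by decide)) (by decide) (by decide) (by decide)
          (by intro z hz
              rcases (by decide : ∀ w : X24, w ∈ ({1,2,3,5,6} : Finset X24) → w = 1 ∨ w = 2 ∨ w = 3 ∨ w = 5 ∨ w = 6) z hz with rfl|rfl|rfl|rfl|rfl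
              · rw [e1]; decide
              · rw [e2]; decide
              · rw [e3]; decide
              · rw [e5]; decide
              · rw [e6]; decide
              )
      have m10_2 : σ 10 ∈ ({1,2,3,5,6,10,19,20} : Finset X24) := (s15 10).mp (by decide)
      have m10_3 : σ 10 ∈ ({1,2,4,6,9,10,13,21} : Finset X24) := (s7 10).mp (by decide)
      have s16 : ∀ y, y ∈ ({1,3,4,5,9,10,22,24} : Finset X24) ↔ σ y ∈ ({1,3,4,5,9,10,22,24} : Finset X24) :=
        octStab hσ ({1,3,4,5,9,10,22,24} : Finset X24) ({1,3,4,5,9} : Finset X24) (golay_of_alt (by decide)) (by decide) (by decide) (by decide)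
          (by intro z hz
              rcases (by decide : ∀ w : X24, w ∈ ({1,3,4,5,9} : Finset X24) → w = 1 ∨ w = 3 ∨ w = 4 ∨ w = 5 ∨ w = 9) z hz with rfl|rfl|rfl|rfl|rfl
              · rw [e1]; decide
              · rw [e3]; decide
              · rw [e4]; decide
              · rw [e5]; decide
              · rw [e9]; decide
              )
      have m10_4 : σ 10 ∈ ({1,3,4,5,9,10,22,24} : Finset X24) := (s16 10).mp (by decide)
      have s17 : ∀ y, y ∈ ({2,3,4,5,10,17,18,21} : Finset X24) ↔ σ y ∈ ({2,3,4,5,10,17,18,21} : Finset X24) :=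
        octStab hσ ({2,3,4,5,10,17,18,21} : Finset X24) ({2,3,4,5,18} : Finset X24) (golay_of_alt (by decide)) (by decide) (by decide) (by decide)
          (by intro z hz
              rcases (by decide : ∀ w : X24, w ∈ ({2,3,4,5,18} : Finset X24) → w = 2 ∨ w = 3 ∨ w = 4 ∨ w = 5 ∨ w = 18) z hz with rfl|rfl|rfl|rfl|rfl
              · rw [e2]; decide
              · rw [e3]; decide
              · rw [e4]; decide
              · rw [e5]; decide
              · rw [e18]; decide
              )
      have m10_5 : σ 10 ∈ ({2,3,4,5,10,17,18,21} : Finset X24) := (s17 10).mp (by decide)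
      have e10 : σ 10 = 10 := (by decide : ∀ w : X24, w ∈ ({1,2,3,4,7,10,12,23} : Finset X24) → w ∈ ({1,2,3,5,6,10,19,20} : Finset X24) → w ∈ ({1,2,4,6,9,10,13,21} : Finset X24) → w ∈ ({1,3,4,5,9,10,22,24} : Finset X24) → w ∈ ({2,3,4,5,10,17,18,21} : Finset X24) → w = 10) _ m10_1 m10_2 m10_3 m10_4 m10_5
      have m11_1 : σ 11 ∈ ({1,2,3,4,5,8,11,13} : Finset X24) := (s2 11).mp (by decide)
      have s18 : ∀ y, y ∈ ({1,2,3,6,9,11,22,23} : Finset X24) ↔ σ y ∈ ({1,2,3,6,9,11,22,23} : Finset X24) :=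
        octStab hσ ({1,2,3,6,9,11,22,23} : Finset X24) ({1,2,3,6,9} : Finset X24) (golay_of_alt (by decide)) (by decide) (by decide) (by decide)
          (by intro z hz
              rcases (by decide : ∀ w : X24, w ∈ ({1,2,3,6,9} : Finset X24) → w = 1 ∨ w = 2 ∨ w = 3 ∨ w = 6 ∨ w = 9) z hz with rfl|rfl|rfl|rfl|rfl
              · rw [e1]; decide
              · rw [e2]; decide
              · rw [e3]; decide
              · rw [e6]; decide
              · rw [e9]; decide
              )
      have m11_2 : σ 11 ∈ ({1,2,3,6,9,11,22,23} : Finset X24) := (s18 11).mp (by decide)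
      have s19 : ∀ y, y ∈ ({1,2,4,6,11,12,16,19} : Finset X24) ↔ σ y ∈ ({1,2,4,6,11,12,16,19} : Finset X24) :=
        octStab hσ ({1,2,4,6,11,12,16,19} : Finset X24) ({1,2,4,6,12} : Finset X24) (golay_of_alt (by decide)) (by decide) (by decide) (by decide)
          (by intro z hz
              rcases (by decide : ∀ w : X24, w ∈ ({1,2,4,6,12} : Finset X24) → w = 1 ∨ w = 2 ∨ w = 4 ∨ w = 6 ∨ w = 12) z hz with rfl|rfl|rfl|rfl|rfl
              · rw [e1]; decide
              · rw [e2]; decide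
              · rw [e4]; decide
              · rw [e6]; decide
              · rw [e12]; decide
              )
      have m11_3 : σ 11 ∈ ({1,2,4,6,11,12,16,19} : Finset X24) := (s19 11).mp (by decide)
      have s20 : ∀ y, y ∈ ({1,3,4,6,10,11,14,17} : Finset X24) ↔ σ y ∈ ({1,3,4,6,10,11,14,17} : Finset X24) :=
        octStab hσ ({1,3,4,6,10,11,14,17} : Finset X24) ({1,3,4,6,10} : Finset X24) (golay_of_alt (by decide)) (by decide) (by decide) (by decide)
          (by intro z hz
              rcases (by decide : ∀ w : X24, w ∈ ({1,3,4,6,10} : Finset X24) → w = 1 ∨ w = 3 ∨ w = 4 ∨ w = 6 ∨ w = 10) z hz with rfl|rfl|rfl|rfl|rfl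
              · rw [e1]; decide
              · rw [e3]; decide
              · rw [e4]; decide
              · rw [e6]; decide
              · rw [e10]; decide
              )
      have m11_4 : σ 11 ∈ ({1,3,4,6,10,11,14,17} : Finset X24) := (s20 11).mp (by decide)
      have m11_5 : σ 11 ∈ ({2,3,4,6,7,11,20,21} : Finset X24) := (s14 11).mp (by decide)
      have e11 : σ 11 = 11 := (by decide : ∀ w : X24, w ∈ ({1,2,3,4,5,8,11,13} : Finset X24) → w ∈ ({1,2,3,6,9,11,22,23} : Finset X24) → w ∈ ({1,2,4,6,11,12,16,19} : Finset X24) → w ∈ ({1,3,4,6,10,11,14,17} : Finset X24) → w ∈ ({2,3,4,6,7,11,20,21} : Finset X24) → w = 11) _ m11_1 m11_2 m11_3 m11_4 m11_5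
      have s21 : ∀ y, y ∈ ({1,2,3,4,14,19,21,22} : Finset X24) ↔ σ y ∈ ({1,2,3,4,14,19,21,22} : Finset X24) :=
        octStab hσ ({1,2,3,4,14,19,21,22} : Finset X24) ({1,2,3,4,21} : Finset X24) (golay_of_alt (by decide)) (by decide) (by decide) (by decide)
          (by intro z hz
              rcases (by decide : ∀ w : X24, w ∈ ({1,2,3,4,21} : Finset X24) → w = 1 ∨ w = 2 ∨ w = 3 ∨ w = 4 ∨ w = 21) z hz with rfl|rfl|rfl|rfl|rfl
              · rw [e1]; decide
              · rw [e2]; decide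
              · rw [e3]; decide
              · rw [e4]; decide
              · rw [e21]; decide
              )
      have m14_1 : σ 14 ∈ ({1,2,3,4,14,19,21,22} : Finset X24) := (s21 14).mp (by decide)
      have s22 : ∀ y, y ∈ ({1,2,3,6,7,13,14,16} : Finset X24) ↔ σ y ∈ ({1,2,3,6,7,13,14,16} : Finset X24) :=
        octStab hσ ({1,2,3,6,7,13,14,16} : Finset X24) ({1,2,3,6,7} : Finset X24) (golay_of_alt (by decide)) (by decide) (by decide) (by decide)
          (by intro z hz
              rcases (by decide : ∀ w : X24, w ∈ ({1,2,3,6,7} : Finset X24) → w = 1 ∨ w = 2 ∨ w = 3 ∨ w = 6 ∨ w = 7) z hz with rfl|rfl|rfl|rfl|rfl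
              · rw [e1]; decide
              · rw [e2]; decide
              · rw [e3]; decide
              · rw [e6]; decide
              · rw [e7]; decide
              )
      have m14_2 : σ 14 ∈ ({1,2,3,6,7,13,14,16} : Finset X24) := (s22 14).mp (by decide)
      have s23 : ∀ y, y ∈ ({1,2,4,5,10,14,15,16} : Finset X24) ↔ σ y ∈ ({1,2,4,5,10,14,15,16} : Finset X24) :=
        octStab hσ ({1,2,4,5,10,14,15,16} : Finset X24) ({1,2,4,5,10} : Finset X24) (golay_of_alt (by decide)) (by decide) (by decide) (by decide)
          (by intro z hz
              rcases (by decide : ∀ w : X24, w ∈ ({1,2,4,5,10} : Finset X24) → w = 1 ∨ w = 2 ∨ w = 4 ∨ w = 5 ∨ w = 10) z hz with rfl|rfl|rfl|rfl|rfl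
              · rw [e1]; decide
              · rw [e2]; decide
              · rw [e4]; decide
              · rw [e5]; decide
              · rw [e10]; decide
              )
      have m14_3 : σ 14 ∈ ({1,2,4,5,10,14,15,16} : Finset X24) := (s23 14).mp (by decide)
      have m14_4 : σ 14 ∈ ({1,3,4,5,7,14,18,20} : Finset X24) := (s13 14).mp (by decide)
      have m14_5 : σ 14 ∈ ({2,3,4,5,6,9,12,14} : Finset X24) := (s8 14).mp (by decide)
      have e14 : σ 14 = 14 := (by decide : ∀ w : X24, w ∈ ({1,2,3,4,14,19,21,22} : Finset X24) → w ∈ ({1,2,3,6,7,13,14,16} : Finset X24) → w ∈ ({1,2,4,5,10,14,15,16} : Finset X24) → w ∈ ({1,3,4,5,7,14,18,20} : Finset X24) → w ∈ ({2,3,4,5,6,9,12,14} : Finset X24) → w = 14) _ m14_1 m14_2 m14_3 m14_4 m14_5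
      have m15_1 : σ 15 ∈ ({1,2,3,4,6,15,18,24} : Finset X24) := (s9 15).mp (by decide)
      have m15_2 : σ 15 ∈ ({1,2,3,5,7,9,15,21} : Finset X24) := (s3 15).mp (by decide)
      have m15_3 : σ 15 ∈ ({1,2,4,5,10,14,15,16} : Finset X24) := (s23 15).mp (by decide)
      have s24 : ∀ y, y ∈ ({1,3,4,5,12,15,17,19} : Finset X24) ↔ σ y ∈ ({1,3,4,5,12,15,17,19} : Finset X24) :=
        octStab hσ ({1,3,4,5,12,15,17,19} : Finset X24) ({1,3,4,5,12} : Finset X24) (golay_of_alt (by decide)) (by decide) (by decide) (by decide)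
          (by intro z hz
              rcases (by decide : ∀ w : X24, w ∈ ({1,3,4,5,12} : Finset X24) → w = 1 ∨ w = 3 ∨ w = 4 ∨ w = 5 ∨ w = 12) z hz with rfl|rfl|rfl|rfl|rfl
              · rw [e1]; decide
              · rw [e3]; decide
              · rw [e4]; decide
              · rw [e5]; decide
              · rw [e12]; decide
              )
      have m15_4 : σ 15 ∈ ({1,3,4,5,12,15,17,19} : Finset X24) := (s24 15).mp (by decide)
      have s25 : ∀ y, y ∈ ({2,3,4,7,8,14,15,17} : Finset X24) ↔ σ y ∈ ({2,3,4,7,8,14,15,17} : Finset X24) :=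
        octStab hσ ({2,3,4,7,8,14,15,17} : Finset X24) ({2,3,4,7,8} : Finset X24) (golay_of_alt (by decide)) (by decide) (by decide) (by decide)
          (by intro z hz
              rcases (by decide : ∀ w : X24, w ∈ ({2,3,4,7,8} : Finset X24) → w = 2 ∨ w = 3 ∨ w = 4 ∨ w = 7 ∨ w = 8) z hz with rfl|rfl|rfl|rfl|rfl
              · rw [e2]; decide
              · rw [e3]; decide
              · rw [e4]; decide
              · rw [e7]; decide
              · rw [e8]; decide
              )
      have m15_5 : σ 15 ∈ ({2,3,4,7,8,14,15,17} : Finset X24) := (s25 15).mp (by decide)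
      have e15 : σ 15 = 15 := (by decide : ∀ w : X24, w ∈ ({1,2,3,4,6,15,18,24} : Finset X24) → w ∈ ({1,2,3,5,7,9,15,21} : Finset X24) → w ∈ ({1,2,4,5,10,14,15,16} : Finset X24) → w ∈ ({1,3,4,5,12,15,17,19} : Finset X24) → w ∈ ({2,3,4,7,8,14,15,17} : Finset X24) → w = 15) _ m15_1 m15_2 m15_3 m15_4 m15_5
      have s26 : ∀ y, y ∈ ({1,2,3,4,9,16,17,20} : Finset X24) ↔ σ y ∈ ({1,2,3,4,9,16,17,20} : Finset X24) :=
        octStab hσ ({1,2,3,4,9,16,17,20} : Finset X24) ({1,2,3,4,9} : Finset X24) (golay_of_alt (by decide)) (by decide) (by decide) (by decide)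
          (by intro z hz
              rcases (by decide : ∀ w : X24, w ∈ ({1,2,3,4,9} : Finset X24) → w = 1 ∨ w = 2 ∨ w = 3 ∨ w = 4 ∨ w = 9) z hz with rfl|rfl|rfl|rfl|rfl
              · rw [e1]; decide
              · rw [e2]; decide
              · rw [e3]; decide
              · rw [e4]; decide
              · rw [e9]; decide
              )
      have m16_1 : σ 16 ∈ ({1,2,3,4,9,16,17,20} : Finset X24) := (s26 16).mp (by decide)
      have s27 : ∀ y, y ∈ ({1,2,3,5,12,16,18,22} : Finset X24) ↔ σ y ∈ ({1,2,3,5,12,16,18,22} : Finset X24) :=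
        octStab hσ ({1,2,3,5,12,16,18,22} : Finset X24) ({1,2,3,5,12} : Finset X24) (golay_of_alt (by decide)) (by decide) (by decide) (by decide)
          (by intro z hz
              rcases (by decide : ∀ w : X24, w ∈ ({1,2,3,5,12} : Finset X24) → w = 1 ∨ w = 2 ∨ w = 3 ∨ w = 5 ∨ w = 12) z hz with rfl|rfl|rfl|rfl|rfl
              · rw [e1]; decide
              · rw [e2]; decide
              · rw [e3]; decide
              · rw [e5]; decide
              · rw [e12]; decide
              )
      have m16_2 : σ 16 ∈ ({1,2,3,5,12,16,18,22} : Finset X24) := (s27 16).mp (by decide)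
      have m16_3 : σ 16 ∈ ({1,2,4,5,10,14,15,16} : Finset X24) := (s23 16).mp (by decide)
      have m16_4 : σ 16 ∈ ({1,3,4,5,6,16,21,23} : Finset X24) := (s10 16).mp (by decide)
      have s28 : ∀ y, y ∈ ({2,3,4,5,7,16,19,24} : Finset X24) ↔ σ y ∈ ({2,3,4,5,7,16,19,24} : Finset X24) :=
        octStab hσ ({2,3,4,5,7,16,19,24} : Finset X24) ({2,3,4,5,7} : Finset X24) (golay_of_alt (by decide)) (by decide) (by decide) (by decide)
          (by intro z hz
              rcases (by decide : ∀ w : X24, w ∈ ({2,3,4,5,7} : Finset X24) → w = 2 ∨ w = 3 ∨ w = 4 ∨ w = 5 ∨ w = 7) z hz with rfl|rfl|rfl|rfl|rfl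
              · rw [e2]; decide
              · rw [e3]; decide
              · rw [e4]; decide
              · rw [e5]; decide
              · rw [e7]; decide
              )
      have m16_5 : σ 16 ∈ ({2,3,4,5,7,16,19,24} : Finset X24) := (s28 16).mp (by decide)
      have e16 : σ 16 = 16 := (by decide : ∀ w : X24, w ∈ ({1,2,3,4,9,16,17,20} : Finset X24) → w ∈ ({1,2,3,5,12,16,18,22} : Finset X24) → w ∈ ({1,2,4,5,10,14,15,16} : Finset X24) → w ∈ ({1,3,4,5,6,16,21,23} : Finset X24) → w ∈ ({2,3,4,5,7,16,19,24} : Finset X24) → w = 16) _ m16_1 m16_2 m16_3 m16_4 m16_5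
      have m17_1 : σ 17 ∈ ({1,2,3,4,9,16,17,20} : Finset X24) := (s26 17).mp (by decide)
      have s29 : ∀ y, y ∈ ({1,2,3,5,14,17,23,24} : Finset X24) ↔ σ y ∈ ({1,2,3,5,14,17,23,24} : Finset X24) :=
        octStab hσ ({1,2,3,5,14,17,23,24} : Finset X24) ({1,2,3,5,14} : Finset X24) (golay_of_alt (by decide)) (by decide) (by decide) (by decide)
          (by intro z hz
              rcases (by decide : ∀ w : X24, w ∈ ({1,2,3,5,14} : Finset X24) → w = 1 ∨ w = 2 ∨ w = 3 ∨ w = 5 ∨ w = 14) z hz with rfl|rfl|rfl|rfl|rfl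
              · rw [e1]; decide
              · rw [e2]; decide
              · rw [e3]; decide
              · rw [e5]; decide
              · rw [e14]; decide
              )
      have m17_2 : σ 17 ∈ ({1,2,3,5,14,17,23,24} : Finset X24) := (s29 17).mp (by decide)
      have m17_3 : σ 17 ∈ ({1,2,4,5,6,7,17,22} : Finset X24) := (s12 17).mp (by decide)
      have m17_4 : σ 17 ∈ ({1,3,4,5,12,15,17,19} : Finset X24) := (s24 17).mp (by decide)
      have m17_5 : σ 17 ∈ ({2,3,4,5,10,17,18,21} : Finset X24) := (s17 17).mp (by decide)
      have e17 : σ 17 = 17 := (by decide : ∀ w : X24, w ∈ ({1,2,3,4,9,16,17,20} : Finset X24) → w ∈ ({1,2,3,5,14,17,23,24} : Finset X24) → w ∈ ({1,2,4,5,6,7,17,22} : Finset X24) → w ∈ ({1,3,4,5,12,15,17,19} : Finset X24) → w ∈ ({2,3,4,5,10,17,18,21} : Finset X24) → w = 17) _ m17_1 m17_2 m17_3 m17_4 m17_5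
      have m19_1 : σ 19 ∈ ({1,2,3,4,14,19,21,22} : Finset X24) := (s21 19).mp (by decide)
      have m19_2 : σ 19 ∈ ({1,2,3,5,6,10,19,20} : Finset X24) := (s15 19).mp (by decide)
      have m19_3 : σ 19 ∈ ({1,2,4,5,9,18,19,23} : Finset X24) := (s6 19).mp (by decide)
      have m19_4 : σ 19 ∈ ({1,3,4,5,12,15,17,19} : Finset X24) := (s24 19).mp (by decide)
      have m19_5 : σ 19 ∈ ({2,3,4,5,7,16,19,24} : Finset X24) := (s28 19).mp (by decide)
      have e19 : σ 19 = 19 := (by decide : ∀ w : X24, w ∈ ({1,2,3,4,14,19,21,22} : Finset X24) → w ∈ ({1,2,3,5,6,10,19,20} : Finset X24) → w ∈ ({1,2,4,5,9,18,19,23} : Finset X24) → w ∈ ({1,3,4,5,12,15,17,19} : Finset X24) → w ∈ ({2,3,4,5,7,16,19,24} : Finset X24) → w = 19) _ m19_1 m19_2 m19_3 m19_4 m19_5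
      have m20_1 : σ 20 ∈ ({1,2,3,4,9,16,17,20} : Finset X24) := (s26 20).mp (by decide)
      have m20_2 : σ 20 ∈ ({1,2,3,5,6,10,19,20} : Finset X24) := (s15 20).mp (by decide)
      have s30 : ∀ y, y ∈ ({1,2,4,5,12,20,21,24} : Finset X24) ↔ σ y ∈ ({1,2,4,5,12,20,21,24} : Finset X24) :=
        octStab hσ ({1,2,4,5,12,20,21,24} : Finset X24) ({1,2,4,5,12} : Finset X24) (golay_of_alt (by decide)) (by decide) (by decide) (by decide)
          (by intro z hz
              rcases (by decide : ∀ w : X24, w ∈ ({1,2,4,5,12} : Finset X24) → w = 1 ∨ w = 2 ∨ w = 4 ∨ w = 5 ∨ w = 12) z hz with rfl|rfl|rfl|rfl|rfl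
              · rw [e1]; decide
              · rw [e2]; decide
              · rw [e4]; decide
              · rw [e5]; decide
              · rw [e12]; decide
              )
      have m20_3 : σ 20 ∈ ({1,2,4,5,12,20,21,24} : Finset X24) := (s30 20).mp (by decide)
      have m20_4 : σ 20 ∈ ({1,3,4,5,7,14,18,20} : Finset X24) := (s13 20).mp (by decide)
      have s31 : ∀ y, y ∈ ({2,3,4,5,15,20,22,23} : Finset X24) ↔ σ y ∈ ({2,3,4,5,15,20,22,23} : Finset X24) :=
        octStab hσ ({2,3,4,5,15,20,22,23} : Finset X24) ({2,3,4,5,15} : Finset X24) (golay_of_alt (by decide)) (by decide) (by decide) (by decide)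
          (by intro z hz
              rcases (by decide : ∀ w : X24, w ∈ ({2,3,4,5,15} : Finset X24) → w = 2 ∨ w = 3 ∨ w = 4 ∨ w = 5 ∨ w = 15) z hz with rfl|rfl|rfl|rfl|rfl
              · rw [e2]; decide
              · rw [e3]; decide
              · rw [e4]; decide
              · rw [e5]; decide
              · rw [e15]; decide
              )
      have m20_5 : σ 20 ∈ ({2,3,4,5,15,20,22,23} : Finset X24) := (s31 20).mp (by decide)
      have e20 : σ 20 = 20 := (by decide : ∀ w : X24, w ∈ ({1,2,3,4,9,16,17,20} : Finset X24) → w ∈ ({1,2,3,5,6,10,19,20} : Finset X24) → w ∈ ({1,2,4,5,12,20,21,24} : Finset X24) → w ∈ ({1,3,4,5,7,14,18,20} : Finset X24) → w ∈ ({2,3,4,5,15,20,22,23} : Finset X24) → w = 20) _ m20_1 m20_2 m20_3 m20_4 m20_5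
      have m22_1 : σ 22 ∈ ({1,2,3,4,14,19,21,22} : Finset X24) := (s21 22).mp (by decide)
      have m22_2 : σ 22 ∈ ({1,2,3,5,12,16,18,22} : Finset X24) := (s27 22).mp (by decide)
      have m22_3 : σ 22 ∈ ({1,2,4,5,6,7,17,22} : Finset X24) := (s12 22).mp (by decide)
      have m22_4 : σ 22 ∈ ({1,3,4,5,9,10,22,24} : Finset X24) := (s16 22).mp (by decide)
      have m22_5 : σ 22 ∈ ({2,3,4,5,15,20,22,23} : Finset X24) := (s31 22).mp (by decide)
      have e22 : σ 22 = 22 := (by decide : ∀ w : X24, w ∈ ({1,2,3,4,14,19,21,22} : Finset X24) → w ∈ ({1,2,3,5,12,16,18,22} : Finset X24) → w ∈ ({1,2,4,5,6,7,17,22} : Finset X24) → w ∈ ({1,3,4,5,9,10,22,24} : Finset X24) → w ∈ ({2,3,4,5,15,20,22,23} : Finset X24) → w = 22) _ m22_1 m22_2 m22_3 m22_4 m22_5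
      have m23_1 : σ 23 ∈ ({1,2,3,4,7,10,12,23} : Finset X24) := (s11 23).mp (by decide)
      have m23_2 : σ 23 ∈ ({1,2,3,5,14,17,23,24} : Finset X24) := (s29 23).mp (by decide)
      have m23_3 : σ 23 ∈ ({1,2,4,5,9,18,19,23} : Finset X24) := (s6 23).mp (by decide)
      have m23_4 : σ 23 ∈ ({1,3,4,5,6,16,21,23} : Finset X24) := (s10 23).mp (by decide)
      have m23_5 : σ 23 ∈ ({2,3,4,5,15,20,22,23} : Finset X24) := (s31 23).mp (by decide)
      have e23 : σ 23 = 23 := (by decide : ∀ w : X24, w ∈ ({1,2,3,4,7,10,12,23} : Finset X24) → w ∈ ({1,2,3,5,14,17,23,24} : Finset X24) → w ∈ ({1,2,4,5,9,18,19,23} : Finset X24) → w ∈ ({1,3,4,5,6,16,21,23} : Finset X24) → w ∈ ({2,3,4,5,15,20,22,23} : Finset X24) → w = 23) _ m23_1 m23_2 m23_3 m23_4 m23_5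
      intro z hz
      rcases (by decide : ∀ w : X24, w ∈ Dset → w = 1 ∨ w = 2 ∨ w = 3 ∨ w = 4 ∨ w = 6 ∨ w = 8 ∨ w = 9 ∨ w = 12 ∨ w = 13 ∨ w = 16 ∨ w = 18 ∨ w = 23) z hz with rfl|rfl|rfl|rfl|rfl|rfl|rfl|rfl|rfl|rfl|rfl|rfl
      exacts [e1, e2, e3, e4, e6, e8, e9, e12, e13, e16, e18, e23]
    · -- case σ 1 = 3
      have s32 : ∀ y, y ∈ ({1,2,3,4,5,8,11,13} : Finset X24) ↔ σ y ∈ ({1,2,3,4,5,8,11,13} : Finset X24) :=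
        octStab hσ ({1,2,3,4,5,8,11,13} : Finset X24) ({1,2,5,8,13} : Finset X24) (golay_of_alt (by decide)) (by decide) (by decide) (by decide)
          (by intro z hz
              rcases (by decide : ∀ w : X24, w ∈ ({1,2,5,8,13} : Finset X24) → w = 1 ∨ w = 2 ∨ w = 5 ∨ w = 8 ∨ w = 13) z hz with rfl|rfl|rfl|rfl|rfl
              · rw [e1]; decide
              · rw [e2]; decide
              · rw [e5]; decide
              · rw [e8]; decide
              · rw [e13]; decide
              )
      have m3_1 : σ 3 ∈ ({1,2,3,4,5,8,11,13} : Finset X24) := (s32 3).mp (by decide)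
      have s33 : ∀ y, y ∈ ({1,2,3,5,7,9,15,21} : Finset X24) ↔ σ y ∈ ({1,2,3,5,7,9,15,21} : Finset X24) :=
        octStab hσ ({1,2,3,5,7,9,15,21} : Finset X24) ({1,2,5,9,21} : Finset X24) (golay_of_alt (by decide)) (by decide) (by decide) (by decide)
          (by intro z hz
              rcases (by decide : ∀ w : X24, w ∈ ({1,2,5,9,21} : Finset X24) → w = 1 ∨ w = 2 ∨ w = 5 ∨ w = 9 ∨ w = 21) z hz with rfl|rfl|rfl|rfl|rfl
              · rw [e1]; decide
              · rw [e2]; decide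
              · rw [e5]; decide
              · rw [e9]; decide
              · rw [e21]; decide
              )
      have m3_2 : σ 3 ∈ ({1,2,3,5,7,9,15,21} : Finset X24) := (s33 3).mp (by decide)
      have s34 : ∀ y, y ∈ ({1,2,3,6,8,12,17,21} : Finset X24) ↔ σ y ∈ ({1,2,3,6,8,12,17,21} : Finset X24) :=
        octStab hσ ({1,2,3,6,8,12,17,21} : Finset X24) ({1,2,8,12,21} : Finset X24) (golay_of_alt (by decide)) (by decide) (by decide) (by decide)
          (by intro z hz
              rcases (by decide : ∀ w : X24, w ∈ ({1,2,8,12,21} : Finset X24) → w = 1 ∨ w = 2 ∨ w = 8 ∨ w = 12 ∨ w = 21) z hz with rfl|rfl|rfl|rfl|rfl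
              · rw [e1]; decide
              · rw [e2]; decide
              · rw [e8]; decide
              · rw [e12]; decide
              · rw [e21]; decide
              )
      have m3_3 : σ 3 ∈ ({1,2,3,6,8,12,17,21} : Finset X24) := (s34 3).mp (by decide)
      have s35 : ∀ y, y ∈ ({1,3,4,9,11,12,18,21} : Finset X24) ↔ σ y ∈ ({1,3,4,9,11,12,18,21} : Finset X24) :=
        octStab hσ ({1,3,4,9,11,12,18,21} : Finset X24) ({1,9,12,18,21} : Finset X24) (golay_of_alt (by decide)) (by decide) (by decide) (by decide)
          (by intro z hz
              rcases (by decide : ∀ w : X24, w ∈ ({1,9,12,18,21} : Finset X24) → w = 1 ∨ w = 9 ∨ w = 12 ∨ w = 18 ∨ w = 21) z hz with rfl|rfl|rfl|rfl|rfl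
              · rw [e1]; decide
              · rw [e9]; decide
              · rw [e12]; decide
              · rw [e18]; decide
              · rw [e21]; decide
              )
      have m3_4 : σ 3 ∈ ({1,3,4,9,11,12,18,21} : Finset X24) := (s35 3).mp (by decide)
      have m3_5 : σ 3 ≠ 3 := fun hh => absurd (σ.injective (hh.trans e1.symm)) (by decide)
      have e3 : σ 3 = 1 := (by decide : ∀ w : X24, w ∈ ({1,2,3,4,5,8,11,13} : Finset X24) → w ∈ ({1,2,3,5,7,9,15,21} : Finset X24) → w ∈ ({1,2,3,6,8,12,17,21} : Finset X24) → w ∈ ({1,3,4,9,11,12,18,21} : Finset X24) → w ≠ 3 → w = 1) _ m3_1 m3_2 m3_3 m3_4 m3_5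
      have m4_1 : σ 4 ∈ ({1,2,3,4,5,8,11,13} : Finset X24) := (s32 4).mp (by decide)
      have m4_2 : σ 4 ∈ ({1,3,4,9,11,12,18,21} : Finset X24) := (s35 4).mp (by decide)
      have m4_3 : σ 4 ∈ Dset := (hD 4).mp (by decide)
      have m4_4 : σ 4 ∉ ({1,2,3,5,7,9,15,21} : Finset X24) := fun hh => (by decide : (4:X24) ∈ ({1,2,3,5,7,9,15,21} : Finset X24) → False) ((s33 4).mpr hh)
      have e4 : σ 4 = 4 := (by decide : ∀ w : X24, w ∈ ({1,2,3,4,5,8,11,13} : Finset X24) → w ∈ ({1,3,4,9,11,12,18,21} : Finset X24) → w ∈ Dset → w ∉ ({1,2,3,5,7,9,15,21} : Finset X24) → w = 4) _ m4_1 m4_2 m4_3 m4_4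
      have s36 : ∀ y, y ∈ ({1,2,4,5,9,18,19,23} : Finset X24) ↔ σ y ∈ ({1,2,4,5,9,18,19,23} : Finset X24) :=
        octStab hσ ({1,2,4,5,9,18,19,23} : Finset X24) ({2,4,5,9,18} : Finset X24) (golay_of_alt (by decide)) (by decide) (by decide) (by decide)
          (by intro z hz
              rcases (by decide : ∀ w : X24, w ∈ ({2,4,5,9,18} : Finset X24) → w = 2 ∨ w = 4 ∨ w = 5 ∨ w = 9 ∨ w = 18) z hz with rfl|rfl|rfl|rfl|rfl
              · rw [e2]; decide
              · rw [e4]; decide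
              · rw [e5]; decide
              · rw [e9]; decide
              · rw [e18]; decide
              )
      exact absurd ((s36 1).mp (by decide)) (by rw [e1]; decide)
    · -- case σ 1 = 4
      have s37 : ∀ y, y ∈ ({1,2,3,4,5,8,11,13} : Finset X24) ↔ σ y ∈ ({1,2,3,4,5,8,11,13} : Finset X24) :=
        octStab hσ ({1,2,3,4,5,8,11,13} : Finset X24) ({1,2,5,8,13} : Finset X24) (golay_of_alt (by decide)) (by decide) (by decide) (by decide)
          (by intro z hz
              rcases (by decide : ∀ w : X24, w ∈ ({1,2,5,8,13} : Finset X24) → w = 1 ∨ w = 2 ∨ w = 5 ∨ w = 8 ∨ w = 13) z hz with rfl|rfl|rfl|rfl|rfl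
              · rw [e1]; decide
              · rw [e2]; decide
              · rw [e5]; decide
              · rw [e8]; decide
              · rw [e13]; decide
              )
      have m3_1 : σ 3 ∈ ({1,2,3,4,5,8,11,13} : Finset X24) := (s37 3).mp (by decide)
      have s38 : ∀ y, y ∈ ({1,3,4,9,11,12,18,21} : Finset X24) ↔ σ y ∈ ({1,3,4,9,11,12,18,21} : Finset X24) :=
        octStab hσ ({1,3,4,9,11,12,18,21} : Finset X24) ({1,9,12,18,21} : Finset X24) (golay_of_alt (by decide)) (by decide) (by decide) (by decide)
          (by intro z hz
              rcases (by decide : ∀ w : X24, w ∈ ({1,9,12,18,21} : Finset X24) → w = 1 ∨ w = 9 ∨ w = 12 ∨ w = 18 ∨ w = 21) z hz with rfl|rfl|rfl|rfl|rfl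
              · rw [e1]; decide
              · rw [e9]; decide
              · rw [e12]; decide
              · rw [e18]; decide
              · rw [e21]; decide
              )
      have m3_2 : σ 3 ∈ ({1,3,4,9,11,12,18,21} : Finset X24) := (s38 3).mp (by decide)
      have m3_3 : σ 3 ∈ Dset := (hD 3).mp (by decide)
      have s39 : ∀ y, y ∈ ({1,2,4,5,9,18,19,23} : Finset X24) ↔ σ y ∈ ({1,2,4,5,9,18,19,23} : Finset X24) :=
        octStab hσ ({1,2,4,5,9,18,19,23} : Finset X24) ({1,2,5,9,18} : Finset X24) (golay_of_alt (by decide)) (by decide) (by decide) (by decide)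
          (by intro z hz
              rcases (by decide : ∀ w : X24, w ∈ ({1,2,5,9,18} : Finset X24) → w = 1 ∨ w = 2 ∨ w = 5 ∨ w = 9 ∨ w = 18) z hz with rfl|rfl|rfl|rfl|rfl
              · rw [e1]; decide
              · rw [e2]; decide
              · rw [e5]; decide
              · rw [e9]; decide
              · rw [e18]; decide
              )
      have m3_4 : σ 3 ∉ ({1,2,4,5,9,18,19,23} : Finset X24) := fun hh => (by decide : (3:X24) ∈ ({1,2,4,5,9,18,19,23} : Finset X24) → False) ((s39 3).mpr hh)
      have e3 : σ 3 = 3 := (by decide : ∀ w : X24, w ∈ ({1,2,3,4,5,8,11,13} : Finset X24) → w ∈ ({1,3,4,9,11,12,18,21} : Finset X24) → w ∈ Dset → w ∉ ({1,2,4,5,9,18,19,23} : Finset X24) → w = 3) _ m3_1 m3_2 m3_3 m3_4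
      have s40 : ∀ y, y ∈ ({1,2,3,5,7,9,15,21} : Finset X24) ↔ σ y ∈ ({1,2,3,5,7,9,15,21} : Finset X24) :=
        octStab hσ ({1,2,3,5,7,9,15,21} : Finset X24) ({2,3,5,9,21} : Finset X24) (golay_of_alt (by decide)) (by decide) (by decide) (by decide)
          (by intro z hz
              rcases (by decide : ∀ w : X24, w ∈ ({2,3,5,9,21} : Finset X24) → w = 2 ∨ w = 3 ∨ w = 5 ∨ w = 9 ∨ w = 21) z hz with rfl|rfl|rfl|rfl|rfl
              · rw [e2]; decide
              · rw [e3]; decide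
              · rw [e5]; decide
              · rw [e9]; decide
              · rw [e21]; decide
              )
      exact absurd ((s40 1).mp (by decide)) (by rw [e1]; decide)
    · -- case σ 1 = 6
      have s41 : ∀ y, y ∈ ({1,2,3,6,8,12,17,21} : Finset X24) ↔ σ y ∈ ({1,2,3,6,8,12,17,21} : Finset X24) :=
        octStab hσ ({1,2,3,6,8,12,17,21} : Finset X24) ({1,2,8,12,21} : Finset X24) (golay_of_alt (by decide)) (by decide) (by decide) (by decide)
          (by intro z hz
              rcases (by decide : ∀ w : X24, w ∈ ({1,2,8,12,21} : Finset X24) → w = 1 ∨ w = 2 ∨ w = 8 ∨ w = 12 ∨ w = 21) z hz with rfl|rfl|rfl|rfl|rfl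
              · rw [e1]; decide
              · rw [e2]; decide
              · rw [e8]; decide
              · rw [e12]; decide
              · rw [e21]; decide
              )
      have m3_1 : σ 3 ∈ ({1,2,3,6,8,12,17,21} : Finset X24) := (s41 3).mp (by decide)
      have s42 : ∀ y, y ∈ ({1,3,5,6,9,13,17,18} : Finset X24) ↔ σ y ∈ ({1,3,5,6,9,13,17,18} : Finset X24) :=
        octStab hσ ({1,3,5,6,9,13,17,18} : Finset X24) ({1,5,9,13,18} : Finset X24) (golay_of_alt (by decide)) (by decide) (by decide) (by decide)
          (by intro z hz
              rcases (by decide : ∀ w : X24, w ∈ ({1,5,9,13,18} : Finset X24) → w = 1 ∨ w = 5 ∨ w = 9 ∨ w = 13 ∨ w = 18) z hz with rfl|rfl|rfl|rfl|rfl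
              · rw [e1]; decide
              · rw [e5]; decide
              · rw [e9]; decide
              · rw [e13]; decide
              · rw [e18]; decide
              )
      have m3_2 : σ 3 ∈ ({1,3,5,6,9,13,17,18} : Finset X24) := (s42 3).mp (by decide)
      have m3_3 : σ 3 ∈ Dset := (hD 3).mp (by decide)
      have s43 : ∀ y, y ∈ ({1,2,4,6,9,10,13,21} : Finset X24) ↔ σ y ∈ ({1,2,4,6,9,10,13,21} : Finset X24) :=
        octStab hσ ({1,2,4,6,9,10,13,21} : Finset X24) ({1,2,9,13,21} : Finset X24) (golay_of_alt (by decide)) (by decide) (by decide) (by decide)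
          (by intro z hz
              rcases (by decide : ∀ w : X24, w ∈ ({1,2,9,13,21} : Finset X24) → w = 1 ∨ w = 2 ∨ w = 9 ∨ w = 13 ∨ w = 21) z hz with rfl|rfl|rfl|rfl|rfl
              · rw [e1]; decide
              · rw [e2]; decide
              · rw [e9]; decide
              · rw [e13]; decide
              · rw [e21]; decide
              )
      have m3_4 : σ 3 ∉ ({1,2,4,6,9,10,13,21} : Finset X24) := fun hh => (by decide : (3:X24) ∈ ({1,2,4,6,9,10,13,21} : Finset X24) → False) ((s43 3).mpr hh)
      have e3 : σ 3 = 3 := (by decide : ∀ w : X24, w ∈ ({1,2,3,6,8,12,17,21} : Finset X24) → w ∈ ({1,3,5,6,9,13,17,18} : Finset X24) → w ∈ Dset → w ∉ ({1,2,4,6,9,10,13,21} : Finset X24) → w = 3) _ m3_1 m3_2 m3_3 m3_4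
      have s44 : ∀ y, y ∈ ({1,2,3,4,5,8,11,13} : Finset X24) ↔ σ y ∈ ({1,2,3,4,5,8,11,13} : Finset X24) :=
        octStab hσ ({1,2,3,4,5,8,11,13} : Finset X24) ({2,3,5,8,13} : Finset X24) (golay_of_alt (by decide)) (by decide) (by decide) (by decide)
          (by intro z hz
              rcases (by decide : ∀ w : X24, w ∈ ({2,3,5,8,13} : Finset X24) → w = 2 ∨ w = 3 ∨ w = 5 ∨ w = 8 ∨ w = 13) z hz with rfl|rfl|rfl|rfl|rfl
              · rw [e2]; decide
              · rw [e3]; decide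
              · rw [e5]; decide
              · rw [e8]; decide
              · rw [e13]; decide
              )
      exact absurd ((s44 1).mp (by decide)) (by rw [e1]; decide)
    · -- case σ 1 = 16
      have s45 : ∀ y, y ∈ ({1,2,3,5,12,16,18,22} : Finset X24) ↔ σ y ∈ ({1,2,3,5,12,16,18,22} : Finset X24) :=
        octStab hσ ({1,2,3,5,12,16,18,22} : Finset X24) ({1,2,5,12,18} : Finset X24) (golay_of_alt (by decide)) (by decide) (by decide) (by decide)
          (by intro z hz
              rcases (by decide : ∀ w : X24, w ∈ ({1,2,5,12,18} : Finset X24) → w = 1 ∨ w = 2 ∨ w = 5 ∨ w = 12 ∨ w = 18) z hz with rfl|rfl|rfl|rfl|rfl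
              · rw [e1]; decide
              · rw [e2]; decide
              · rw [e5]; decide
              · rw [e12]; decide
              · rw [e18]; decide
              )
      have m3_1 : σ 3 ∈ ({1,2,3,5,12,16,18,22} : Finset X24) := (s45 3).mp (by decide)
      have s46 : ∀ y, y ∈ ({1,3,8,9,13,16,21,22} : Finset X24) ↔ σ y ∈ ({1,3,8,9,13,16,21,22} : Finset X24) :=
        octStab hσ ({1,3,8,9,13,16,21,22} : Finset X24) ({1,8,9,13,21} : Finset X24) (golay_of_alt (by decide)) (by decide) (by decide) (by decide)
          (by intro z hz
              rcases (by decide : ∀ w : X24, w ∈ ({1,8,9,13,21} : Finset X24) → w = 1 ∨ w = 8 ∨ w = 9 ∨ w = 13 ∨ w = 21) z hz with rfl|rfl|rfl|rfl|rfl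
              · rw [e1]; decide
              · rw [e8]; decide
              · rw [e9]; decide
              · rw [e13]; decide
              · rw [e21]; decide
              )
      have m3_2 : σ 3 ∈ ({1,3,8,9,13,16,21,22} : Finset X24) := (s46 3).mp (by decide)
      have m3_3 : σ 3 ∈ Dset := (hD 3).mp (by decide)
      have s47 : ∀ y, y ∈ ({1,2,4,7,8,16,18,21} : Finset X24) ↔ σ y ∈ ({1,2,4,7,8,16,18,21} : Finset X24) :=
        octStab hσ ({1,2,4,7,8,16,18,21} : Finset X24) ({1,2,8,18,21} : Finset X24) (golay_of_alt (by decide)) (by decide) (by decide) (by decide)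
          (by intro z hz
              rcases (by decide : ∀ w : X24, w ∈ ({1,2,8,18,21} : Finset X24) → w = 1 ∨ w = 2 ∨ w = 8 ∨ w = 18 ∨ w = 21) z hz with rfl|rfl|rfl|rfl|rfl
              · rw [e1]; decide
              · rw [e2]; decide
              · rw [e8]; decide
              · rw [e18]; decide
              · rw [e21]; decide
              )
      have m3_4 : σ 3 ∉ ({1,2,4,7,8,16,18,21} : Finset X24) := fun hh => (by decide : (3:X24) ∈ ({1,2,4,7,8,16,18,21} : Finset X24) → False) ((s47 3).mpr hh)
      have e3 : σ 3 = 3 := (by decide : ∀ w : X24, w ∈ ({1,2,3,5,12,16,18,22} : Finset X24) → w ∈ ({1,3,8,9,13,16,21,22} : Finset X24) → w ∈ Dset → w ∉ ({1,2,4,7,8,16,18,21} : Finset X24) → w = 3) _ m3_1 m3_2 m3_3 m3_4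
      have s48 : ∀ y, y ∈ ({1,2,3,4,5,8,11,13} : Finset X24) ↔ σ y ∈ ({1,2,3,4,5,8,11,13} : Finset X24) :=
        octStab hσ ({1,2,3,4,5,8,11,13} : Finset X24) ({2,3,5,8,13} : Finset X24) (golay_of_alt (by decide)) (by decide) (by decide) (by decide)
          (by intro z hz
              rcases (by decide : ∀ w : X24, w ∈ ({2,3,5,8,13} : Finset X24) → w = 2 ∨ w = 3 ∨ w = 5 ∨ w = 8 ∨ w = 13) z hz with rfl|rfl|rfl|rfl|rfl
              · rw [e2]; decide
              · rw [e3]; decide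
              · rw [e5]; decide
              · rw [e8]; decide
              · rw [e13]; decide
              )
      exact absurd ((s48 1).mp (by decide)) (by rw [e1]; decide)
    · -- case σ 1 = 23
      have s49 : ∀ y, y ∈ ({1,2,3,13,18,20,21,23} : Finset X24) ↔ σ y ∈ ({1,2,3,13,18,20,21,23} : Finset X24) :=
        octStab hσ ({1,2,3,13,18,20,21,23} : Finset X24) ({1,2,13,18,21} : Finset X24) (golay_of_alt (by decide)) (by decide) (by decide) (by decide)
          (by intro z hz
              rcases (by decide : ∀ w : X24, w ∈ ({1,2,13,18,21} : Finset X24) → w = 1 ∨ w = 2 ∨ w = 13 ∨ w = 18 ∨ w = 21) z hz with rfl|rfl|rfl|rfl|rfl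
              · rw [e1]; decide
              · rw [e2]; decide
              · rw [e13]; decide
              · rw [e18]; decide
              · rw [e21]; decide
              )
      have m3_1 : σ 3 ∈ ({1,2,3,13,18,20,21,23} : Finset X24) := (s49 3).mp (by decide)
      have s50 : ∀ y, y ∈ ({1,3,5,8,9,12,20,23} : Finset X24) ↔ σ y ∈ ({1,3,5,8,9,12,20,23} : Finset X24) :=
        octStab hσ ({1,3,5,8,9,12,20,23} : Finset X24) ({1,5,8,9,12} : Finset X24) (golay_of_alt (by decide)) (by decide) (by decide) (by decide)
          (by intro z hz
              rcases (by decide : ∀ w : X24, w ∈ ({1,5,8,9,12} : Finset X24) → w = 1 ∨ w = 5 ∨ w = 8 ∨ w = 9 ∨ w = 12) z hz with rfl|rfl|rfl|rfl|rfl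
              · rw [e1]; decide
              · rw [e5]; decide
              · rw [e8]; decide
              · rw [e9]; decide
              · rw [e12]; decide
              )
      have m3_2 : σ 3 ∈ ({1,3,5,8,9,12,20,23} : Finset X24) := (s50 3).mp (by decide)
      have m3_3 : σ 3 ∈ Dset := (hD 3).mp (by decide)
      have s51 : ∀ y, y ∈ ({1,2,4,5,9,18,19,23} : Finset X24) ↔ σ y ∈ ({1,2,4,5,9,18,19,23} : Finset X24) :=
        octStab hσ ({1,2,4,5,9,18,19,23} : Finset X24) ({1,2,5,9,18} : Finset X24) (golay_of_alt (by decide)) (by decide) (by decide) (by decide)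
          (by intro z hz
              rcases (by decide : ∀ w : X24, w ∈ ({1,2,5,9,18} : Finset X24) → w = 1 ∨ w = 2 ∨ w = 5 ∨ w = 9 ∨ w = 18) z hz with rfl|rfl|rfl|rfl|rfl
              · rw [e1]; decide
              · rw [e2]; decide
              · rw [e5]; decide
              · rw [e9]; decide
              · rw [e18]; decide
              )
      have m3_4 : σ 3 ∉ ({1,2,4,5,9,18,19,23} : Finset X24) := fun hh => (by decide : (3:X24) ∈ ({1,2,4,5,9,18,19,23} : Finset X24) → False) ((s51 3).mpr hh)
      have e3 : σ 3 = 3 := (by decide : ∀ w : X24, w ∈ ({1,2,3,13,18,20,21,23} : Finset X24) → w ∈ ({1,3,5,8,9,12,20,23} : Finset X24) → w ∈ Dset → w ∉ ({1,2,4,5,9,18,19,23} : Finset X24) → w = 3) _ m3_1 m3_2 m3_3 m3_4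
      have s52 : ∀ y, y ∈ ({1,2,3,4,5,8,11,13} : Finset X24) ↔ σ y ∈ ({1,2,3,4,5,8,11,13} : Finset X24) :=
        octStab hσ ({1,2,3,4,5,8,11,13} : Finset X24) ({2,3,5,8,13} : Finset X24) (golay_of_alt (by decide)) (by decide) (by decide) (by decide)
          (by intro z hz
              rcases (by decide : ∀ w : X24, w ∈ ({2,3,5,8,13} : Finset X24) → w = 2 ∨ w = 3 ∨ w = 5 ∨ w = 8 ∨ w = 13) z hz with rfl|rfl|rfl|rfl|rfl
              · rw [e2]; decide
              · rw [e3]; decide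
              · rw [e5]; decide
              · rw [e8]; decide
              · rw [e13]; decide
              )
      exact absurd ((s52 1).mp (by decide)) (by rw [e1]; decide)
  · -- case σ 5 = 21
    have m21_1 : σ 21 ∈ ({2,5,8,9,12,13,18,21} : Finset X24) := (s1 21).mp (by decide)
    have m21_2 : σ 21 ∈ DsetC := sideC hσ hD 21 (by decide)
    have m21_3 : σ 21 ≠ 21 := fun hh => absurd (σ.injective (hh.trans e5.symm)) (by decide)
    have e21 : σ 21 = 5 := (by decide : ∀ w : X24, w ∈ ({2,5,8,9,12,13,18,21} : Finset X24) → w ∈ DsetC → w ≠ 21 → w = 5) _ m21_1 m21_2 m21_3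
    have m1_1 : σ 1 ∈ Dset := (hD 1).mp (by decide)
    have m1_2 : σ 1 ∉ ({2,5,8,9,12,13,18,21} : Finset X24) := fun hh => (by decide : (1:X24) ∈ ({2,5,8,9,12,13,18,21} : Finset X24) → False) ((s1 1).mpr hh)
    rcases (by decide : ∀ w : X24, w ∈ Dset → w ∉ ({2,5,8,9,12,13,18,21} : Finset X24) → (w = 1 ∨ w = 3 ∨ w = 4 ∨ w = 6 ∨ w = 16 ∨ w = 23)) _ m1_1 m1_2 with e1|e1|e1|e1|e1|e1
    · -- case σ 1 = 1
      have s53 : ∀ y, y ∈ ({1,2,3,5,7,9,15,21} : Finset X24) ↔ σ y ∈ ({1,2,3,5,7,9,15,21} : Finset X24) :=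
        octStab hσ ({1,2,3,5,7,9,15,21} : Finset X24) ({1,2,5,9,21} : Finset X24) (golay_of_alt (by decide)) (by decide) (by decide) (by decide)
          (by intro z hz
              rcases (by decide : ∀ w : X24, w ∈ ({1,2,5,9,21} : Finset X24) → w = 1 ∨ w = 2 ∨ w = 5 ∨ w = 9 ∨ w = 21) z hz with rfl|rfl|rfl|rfl|rfl
              · rw [e1]; decide
              · rw [e2]; decide
              · rw [e5]; decide
              · rw [e9]; decide
              · rw [e21]; decide
              )
      have m3_1 : σ 3 ∈ ({1,2,3,5,7,9,15,21} : Finset X24) := (s53 3).mp (by decide)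
      have s54 : ∀ y, y ∈ ({1,2,3,8,9,10,14,18} : Finset X24) ↔ σ y ∈ ({1,2,3,8,9,10,14,18} : Finset X24) :=
        octStab hσ ({1,2,3,8,9,10,14,18} : Finset X24) ({1,2,8,9,18} : Finset X24) (golay_of_alt (by decide)) (by decide) (by decide) (by decide)
          (by intro z hz
              rcases (by decide : ∀ w : X24, w ∈ ({1,2,8,9,18} : Finset X24) → w = 1 ∨ w = 2 ∨ w = 8 ∨ w = 9 ∨ w = 18) z hz with rfl|rfl|rfl|rfl|rfl
              · rw [e1]; decide
              · rw [e2]; decide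
              · rw [e8]; decide
              · rw [e9]; decide
              · rw [e18]; decide
              )
      have m3_2 : σ 3 ∈ ({1,2,3,8,9,10,14,18} : Finset X24) := (s54 3).mp (by decide)
      have s55 : ∀ y, y ∈ ({1,3,5,8,18,19,21,24} : Finset X24) ↔ σ y ∈ ({1,3,5,8,18,19,21,24} : Finset X24) :=
        octStab hσ ({1,3,5,8,18,19,21,24} : Finset X24) ({1,5,8,18,21} : Finset X24) (golay_of_alt (by decide)) (by decide) (by decide) (by decide)
          (by intro z hz
              rcases (by decide : ∀ w : X24, w ∈ ({1,5,8,18,21} : Finset X24) → w = 1 ∨ w = 5 ∨ w = 8 ∨ w = 18 ∨ w = 21) z hz with rfl|rfl|rfl|rfl|rfl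
              · rw [e1]; decide
              · rw [e5]; decide
              · rw [e8]; decide
              · rw [e18]; decide
              · rw [e21]; decide
              )
      have m3_3 : σ 3 ∈ ({1,3,5,8,18,19,21,24} : Finset X24) := (s55 3).mp (by decide)
      have s56 : ∀ y, y ∈ ({1,2,4,5,12,20,21,24} : Finset X24) ↔ σ y ∈ ({1,2,4,5,12,20,21,24} : Finset X24) :=
        octStab hσ ({1,2,4,5,12,20,21,24} : Finset X24) ({1,2,5,12,21} : Finset X24) (golay_of_alt (by decide)) (by decide) (by decide) (by decide)
          (by intro z hz
              rcases (by decide : ∀ w : X24, w ∈ ({1,2,5,12,21} : Finset X24) → w = 1 ∨ w = 2 ∨ w = 5 ∨ w = 12 ∨ w = 21) z hz with rfl|rfl|rfl|rfl|rfl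
              · rw [e1]; decide
              · rw [e2]; decide
              · rw [e5]; decide
              · rw [e12]; decide
              · rw [e21]; decide
              )
      have m3_4 : σ 3 ∉ ({1,2,4,5,12,20,21,24} : Finset X24) := fun hh => (by decide : (3:X24) ∈ ({1,2,4,5,12,20,21,24} : Finset X24) → False) ((s56 3).mpr hh)
      have e3 : σ 3 = 3 := (by decide : ∀ w : X24, w ∈ ({1,2,3,5,7,9,15,21} : Finset X24) → w ∈ ({1,2,3,8,9,10,14,18} : Finset X24) → w ∈ ({1,3,5,8,18,19,21,24} : Finset X24) → w ∉ ({1,2,4,5,12,20,21,24} : Finset X24) → w = 3) _ m3_1 m3_2 m3_3 m3_4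
      have s57 : ∀ y, y ∈ ({1,2,3,4,5,8,11,13} : Finset X24) ↔ σ y ∈ ({1,2,3,4,5,8,11,13} : Finset X24) :=
        octStab hσ ({1,2,3,4,5,8,11,13} : Finset X24) ({1,2,3,8,13} : Finset X24) (golay_of_alt (by decide)) (by decide) (by decide) (by decide)
          (by intro z hz
              rcases (by decide : ∀ w : X24, w ∈ ({1,2,3,8,13} : Finset X24) → w = 1 ∨ w = 2 ∨ w = 3 ∨ w = 8 ∨ w = 13) z hz with rfl|rfl|rfl|rfl|rfl
              · rw [e1]; decide
              · rw [e2]; decide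
              · rw [e3]; decide
              · rw [e8]; decide
              · rw [e13]; decide
              )
      exact absurd ((s57 5).mp (by decide)) (by rw [e5]; decide)
    · -- case σ 1 = 3
      have s58 : ∀ y, y ∈ ({1,2,3,5,7,9,15,21} : Finset X24) ↔ σ y ∈ ({1,2,3,5,7,9,15,21} : Finset X24) :=
        octStab hσ ({1,2,3,5,7,9,15,21} : Finset X24) ({1,2,5,9,21} : Finset X24) (golay_of_alt (by decide)) (by decide) (by decide) (by decide)
          (by intro z hz
              rcases (by decide : ∀ w : X24, w ∈ ({1,2,5,9,21} : Finset X24) → w = 1 ∨ w = 2 ∨ w = 5 ∨ w = 9 ∨ w = 21) z hz with rfl|rfl|rfl|rfl|rfl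
              · rw [e1]; decide
              · rw [e2]; decide
              · rw [e5]; decide
              · rw [e9]; decide
              · rw [e21]; decide
              )
      have m3_1 : σ 3 ∈ ({1,2,3,5,7,9,15,21} : Finset X24) := (s58 3).mp (by decide)
      have s59 : ∀ y, y ∈ ({1,2,3,8,9,10,14,18} : Finset X24) ↔ σ y ∈ ({1,2,3,8,9,10,14,18} : Finset X24) :=
        octStab hσ ({1,2,3,8,9,10,14,18} : Finset X24) ({1,2,8,9,18} : Finset X24) (golay_of_alt (by decide)) (by decide) (by decide) (by decide)
          (by intro z hz
              rcases (by decide : ∀ w : X24, w ∈ ({1,2,8,9,18} : Finset X24) → w = 1 ∨ w = 2 ∨ w = 8 ∨ w = 9 ∨ w = 18) z hz with rfl|rfl|rfl|rfl|rfl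
              · rw [e1]; decide
              · rw [e2]; decide
              · rw [e8]; decide
              · rw [e9]; decide
              · rw [e18]; decide
              )
      have m3_2 : σ 3 ∈ ({1,2,3,8,9,10,14,18} : Finset X24) := (s59 3).mp (by decide)
      have s60 : ∀ y, y ∈ ({1,3,5,8,18,19,21,24} : Finset X24) ↔ σ y ∈ ({1,3,5,8,18,19,21,24} : Finset X24) :=
        octStab hσ ({1,3,5,8,18,19,21,24} : Finset X24) ({1,5,8,18,21} : Finset X24) (golay_of_alt (by decide)) (by decide) (by decide) (by decide)
          (by intro z hz
              rcases (by decide : ∀ w : X24, w ∈ ({1,5,8,18,21} : Finset X24) → w = 1 ∨ w = 5 ∨ w = 8 ∨ w = 18 ∨ w = 21) z hz with rfl|rfl|rfl|rfl|rfl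
              · rw [e1]; decide
              · rw [e5]; decide
              · rw [e8]; decide
              · rw [e18]; decide
              · rw [e21]; decide
              )
      have m3_3 : σ 3 ∈ ({1,3,5,8,18,19,21,24} : Finset X24) := (s60 3).mp (by decide)
      have m3_4 : σ 3 ≠ 3 := fun hh => absurd (σ.injective (hh.trans e1.symm)) (by decide)
      have e3 : σ 3 = 1 := (by decide : ∀ w : X24, w ∈ ({1,2,3,5,7,9,15,21} : Finset X24) → w ∈ ({1,2,3,8,9,10,14,18} : Finset X24) → w ∈ ({1,3,5,8,18,19,21,24} : Finset X24) → w ≠ 3 → w = 1) _ m3_1 m3_2 m3_3 m3_4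
      have s61 : ∀ y, y ∈ ({1,2,3,4,5,8,11,13} : Finset X24) ↔ σ y ∈ ({1,2,3,4,5,8,11,13} : Finset X24) :=
        octStab hσ ({1,2,3,4,5,8,11,13} : Finset X24) ({1,2,3,8,13} : Finset X24) (golay_of_alt (by decide)) (by decide) (by decide) (by decide)
          (by intro z hz
              rcases (by decide : ∀ w : X24, w ∈ ({1,2,3,8,13} : Finset X24) → w = 1 ∨ w = 2 ∨ w = 3 ∨ w = 8 ∨ w = 13) z hz with rfl|rfl|rfl|rfl|rfl
              · rw [e1]; decide
              · rw [e2]; decide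
              · rw [e3]; decide
              · rw [e8]; decide
              · rw [e13]; decide
              )
      exact absurd ((s61 5).mp (by decide)) (by rw [e5]; decide)
    · -- case σ 1 = 4
      have s62 : ∀ y, y ∈ ({1,2,4,5,12,20,21,24} : Finset X24) ↔ σ y ∈ ({1,2,4,5,12,20,21,24} : Finset X24) :=
        octStab hσ ({1,2,4,5,12,20,21,24} : Finset X24) ({1,2,5,12,21} : Finset X24) (golay_of_alt (by decide)) (by decide) (by decide) (by decide)
          (by intro z hz
              rcases (by decide : ∀ w : X24, w ∈ ({1,2,5,12,21} : Finset X24) → w = 1 ∨ w = 2 ∨ w = 5 ∨ w = 12 ∨ w = 21) z hz with rfl|rfl|rfl|rfl|rfl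
              · rw [e1]; decide
              · rw [e2]; decide
              · rw [e5]; decide
              · rw [e12]; decide
              · rw [e21]; decide
              )
      have m4_1 : σ 4 ∈ ({1,2,4,5,12,20,21,24} : Finset X24) := (s62 4).mp (by decide)
      have s63 : ∀ y, y ∈ ({1,2,4,8,9,12,15,22} : Finset X24) ↔ σ y ∈ ({1,2,4,8,9,12,15,22} : Finset X24) :=
        octStab hσ ({1,2,4,8,9,12,15,22} : Finset X24) ({1,2,8,9,12} : Finset X24) (golay_of_alt (by decide)) (by decide) (by decide) (by decide)
          (by intro z hz
              rcases (by decide : ∀ w : X24, w ∈ ({1,2,8,9,12} : Finset X24) → w = 1 ∨ w = 2 ∨ w = 8 ∨ w = 9 ∨ w = 12) z hz with rfl|rfl|rfl|rfl|rfl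
              · rw [e1]; decide
              · rw [e2]; decide
              · rw [e8]; decide
              · rw [e9]; decide
              · rw [e12]; decide
              )
      have m4_2 : σ 4 ∈ ({1,2,4,8,9,12,15,22} : Finset X24) := (s63 4).mp (by decide)
      have s64 : ∀ y, y ∈ ({1,4,5,8,9,14,17,21} : Finset X24) ↔ σ y ∈ ({1,4,5,8,9,14,17,21} : Finset X24) :=
        octStab hσ ({1,4,5,8,9,14,17,21} : Finset X24) ({1,5,8,9,21} : Finset X24) (golay_of_alt (by decide)) (by decide) (by decide) (by decide)
          (by intro z hz
              rcases (by decide : ∀ w : X24, w ∈ ({1,5,8,9,21} : Finset X24) → w = 1 ∨ w = 5 ∨ w = 8 ∨ w = 9 ∨ w = 21) z hz with rfl|rfl|rfl|rfl|rfl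
              · rw [e1]; decide
              · rw [e5]; decide
              · rw [e8]; decide
              · rw [e9]; decide
              · rw [e21]; decide
              )
      have m4_3 : σ 4 ∈ ({1,4,5,8,9,14,17,21} : Finset X24) := (s64 4).mp (by decide)
      have m4_4 : σ 4 ≠ 4 := fun hh => absurd (σ.injective (hh.trans e1.symm)) (by decide)
      have e4 : σ 4 = 1 := (by decide : ∀ w : X24, w ∈ ({1,2,4,5,12,20,21,24} : Finset X24) → w ∈ ({1,2,4,8,9,12,15,22} : Finset X24) → w ∈ ({1,4,5,8,9,14,17,21} : Finset X24) → w ≠ 4 → w = 1) _ m4_1 m4_2 m4_3 m4_4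
      have s65 : ∀ y, y ∈ ({1,2,3,4,5,8,11,13} : Finset X24) ↔ σ y ∈ ({1,2,3,4,5,8,11,13} : Finset X24) :=
        octStab hσ ({1,2,3,4,5,8,11,13} : Finset X24) ({1,2,4,8,13} : Finset X24) (golay_of_alt (by decide)) (by decide) (by decide) (by decide)
          (by intro z hz
              rcases (by decide : ∀ w : X24, w ∈ ({1,2,4,8,13} : Finset X24) → w = 1 ∨ w = 2 ∨ w = 4 ∨ w = 8 ∨ w = 13) z hz with rfl|rfl|rfl|rfl|rfl
              · rw [e1]; decide
              · rw [e2]; decide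
              · rw [e4]; decide
              · rw [e8]; decide
              · rw [e13]; decide
              )
      exact absurd ((s65 5).mp (by decide)) (by rw [e5]; decide)
    · -- case σ 1 = 6
      have s66 : ∀ y, y ∈ ({1,2,5,6,11,14,18,21} : Finset X24) ↔ σ y ∈ ({1,2,5,6,11,14,18,21} : Finset X24) :=
        octStab hσ ({1,2,5,6,11,14,18,21} : Finset X24) ({1,2,5,18,21} : Finset X24) (golay_of_alt (by decide)) (by decide) (by decide) (by decide)
          (by intro z hz
              rcases (by decide : ∀ w : X24, w ∈ ({1,2,5,18,21} : Finset X24) → w = 1 ∨ w = 2 ∨ w = 5 ∨ w = 18 ∨ w = 21) z hz with rfl|rfl|rfl|rfl|rfl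
              · rw [e1]; decide
              · rw [e2]; decide
              · rw [e5]; decide
              · rw [e18]; decide
              · rw [e21]; decide
              )
      have m6_1 : σ 6 ∈ ({1,2,5,6,11,14,18,21} : Finset X24) := (s66 6).mp (by decide)
      have s67 : ∀ y, y ∈ ({1,2,6,7,9,12,18,20} : Finset X24) ↔ σ y ∈ ({1,2,6,7,9,12,18,20} : Finset X24) :=
        octStab hσ ({1,2,6,7,9,12,18,20} : Finset X24) ({1,2,9,12,18} : Finset X24) (golay_of_alt (by decide)) (by decide) (by decide) (by decide)
          (by intro z hz
              rcases (by decide : ∀ w : X24, w ∈ ({1,2,9,12,18} : Finset X24) → w = 1 ∨ w = 2 ∨ w = 9 ∨ w = 12 ∨ w = 18) z hz with rfl|rfl|rfl|rfl|rfl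
              · rw [e1]; decide
              · rw [e2]; decide
              · rw [e9]; decide
              · rw [e12]; decide
              · rw [e18]; decide
              )
      have m6_2 : σ 6 ∈ ({1,2,6,7,9,12,18,20} : Finset X24) := (s67 6).mp (by decide)
      have s68 : ∀ y, y ∈ ({1,5,6,7,8,13,20,21} : Finset X24) ↔ σ y ∈ ({1,5,6,7,8,13,20,21} : Finset X24) :=
        octStab hσ ({1,5,6,7,8,13,20,21} : Finset X24) ({1,5,8,13,21} : Finset X24) (golay_of_alt (by decide)) (by decide) (by decide) (by decide)
          (by intro z hz
              rcases (by decide : ∀ w : X24, w ∈ ({1,5,8,13,21} : Finset X24) → w = 1 ∨ w = 5 ∨ w = 8 ∨ w = 13 ∨ w = 21) z hz with rfl|rfl|rfl|rfl|rfl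
              · rw [e1]; decide
              · rw [e5]; decide
              · rw [e8]; decide
              · rw [e13]; decide
              · rw [e21]; decide
              )
      have m6_3 : σ 6 ∈ ({1,5,6,7,8,13,20,21} : Finset X24) := (s68 6).mp (by decide)
      have m6_4 : σ 6 ≠ 6 := fun hh => absurd (σ.injective (hh.trans e1.symm)) (by decide)
      have e6 : σ 6 = 1 := (by decide : ∀ w : X24, w ∈ ({1,2,5,6,11,14,18,21} : Finset X24) → w ∈ ({1,2,6,7,9,12,18,20} : Finset X24) → w ∈ ({1,5,6,7,8,13,20,21} : Finset X24) → w ≠ 6 → w = 1) _ m6_1 m6_2 m6_3 m6_4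
      have s69 : ∀ y, y ∈ ({1,2,3,6,8,12,17,21} : Finset X24) ↔ σ y ∈ ({1,2,3,6,8,12,17,21} : Finset X24) :=
        octStab hσ ({1,2,3,6,8,12,17,21} : Finset X24) ({1,2,6,8,12} : Finset X24) (golay_of_alt (by decide)) (by decide) (by decide) (by decide)
          (by intro z hz
              rcases (by decide : ∀ w : X24, w ∈ ({1,2,6,8,12} : Finset X24) → w = 1 ∨ w = 2 ∨ w = 6 ∨ w = 8 ∨ w = 12) z hz with rfl|rfl|rfl|rfl|rfl
              · rw [e1]; decide
              · rw [e2]; decide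
              · rw [e6]; decide
              · rw [e8]; decide
              · rw [e12]; decide
              )
      exact absurd ((s69 5).mpr (by rw [e5]; decide)) (by decide)
    · -- case σ 1 = 16
      have s70 : ∀ y, y ∈ ({1,2,5,13,16,17,19,21} : Finset X24) ↔ σ y ∈ ({1,2,5,13,16,17,19,21} : Finset X24) :=
        octStab hσ ({1,2,5,13,16,17,19,21} : Finset X24) ({1,2,5,13,21} : Finset X24) (golay_of_alt (by decide)) (by decide) (by decide) (by decide)
          (by intro z hz
              rcases (by decide : ∀ w : X24, w ∈ ({1,2,5,13,21} : Finset X24) → w = 1 ∨ w = 2 ∨ w = 5 ∨ w = 13 ∨ w = 21) z hz with rfl|rfl|rfl|rfl|rfl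
              · rw [e1]; decide
              · rw [e2]; decide
              · rw [e5]; decide
              · rw [e13]; decide
              · rw [e21]; decide
              )
      have m16_1 : σ 16 ∈ ({1,2,5,13,16,17,19,21} : Finset X24) := (s70 16).mp (by decide)
      have s71 : ∀ y, y ∈ ({1,2,8,10,12,13,16,20} : Finset X24) ↔ σ y ∈ ({1,2,8,10,12,13,16,20} : Finset X24) :=
        octStab hσ ({1,2,8,10,12,13,16,20} : Finset X24) ({1,2,8,12,13} : Finset X24) (golay_of_alt (by decide)) (by decide) (by decide) (by decide)
          (by intro z hz
              rcases (by decide : ∀ w : X24, w ∈ ({1,2,8,12,13} : Finset X24) → w = 1 ∨ w = 2 ∨ w = 8 ∨ w = 12 ∨ w = 13) z hz with rfl|rfl|rfl|rfl|rfl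
              · rw [e1]; decide
              · rw [e2]; decide
              · rw [e8]; decide
              · rw [e12]; decide
              · rw [e13]; decide
              )
      have m16_2 : σ 16 ∈ ({1,2,8,10,12,13,16,20} : Finset X24) := (s71 16).mp (by decide)
      have s72 : ∀ y, y ∈ ({1,5,8,11,12,15,16,21} : Finset X24) ↔ σ y ∈ ({1,5,8,11,12,15,16,21} : Finset X24) :=
        octStab hσ ({1,5,8,11,12,15,16,21} : Finset X24) ({1,5,8,12,21} : Finset X24) (golay_of_alt (by decide)) (by decide) (by decide) (by decide)
          (by intro z hz
              rcases (by decide : ∀ w : X24, w ∈ ({1,5,8,12,21} : Finset X24) → w = 1 ∨ w = 5 ∨ w = 8 ∨ w = 12 ∨ w = 21) z hz with rfl|rfl|rfl|rfl|rfl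
              · rw [e1]; decide
              · rw [e5]; decide
              · rw [e8]; decide
              · rw [e12]; decide
              · rw [e21]; decide
              )
      have m16_3 : σ 16 ∈ ({1,5,8,11,12,15,16,21} : Finset X24) := (s72 16).mp (by decide)
      have m16_4 : σ 16 ≠ 16 := fun hh => absurd (σ.injective (hh.trans e1.symm)) (by decide)
      have e16 : σ 16 = 1 := (by decide : ∀ w : X24, w ∈ ({1,2,5,13,16,17,19,21} : Finset X24) → w ∈ ({1,2,8,10,12,13,16,20} : Finset X24) → w ∈ ({1,5,8,11,12,15,16,21} : Finset X24) → w ≠ 16 → w = 1) _ m16_1 m16_2 m16_3 m16_4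
      have s73 : ∀ y, y ∈ ({1,2,3,5,12,16,18,22} : Finset X24) ↔ σ y ∈ ({1,2,3,5,12,16,18,22} : Finset X24) :=
        octStab hσ ({1,2,3,5,12,16,18,22} : Finset X24) ({1,2,12,16,18} : Finset X24) (golay_of_alt (by decide)) (by decide) (by decide) (by decide)
          (by intro z hz
              rcases (by decide : ∀ w : X24, w ∈ ({1,2,12,16,18} : Finset X24) → w = 1 ∨ w = 2 ∨ w = 12 ∨ w = 16 ∨ w = 18) z hz with rfl|rfl|rfl|rfl|rfl
              · rw [e1]; decide
              · rw [e2]; decide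
              · rw [e12]; decide
              · rw [e16]; decide
              · rw [e18]; decide
              )
      exact absurd ((s73 5).mp (by decide)) (by rw [e5]; decide)
    · -- case σ 1 = 23
      have s74 : ∀ y, y ∈ ({1,2,5,8,10,21,22,23} : Finset X24) ↔ σ y ∈ ({1,2,5,8,10,21,22,23} : Finset X24) :=
        octStab hσ ({1,2,5,8,10,21,22,23} : Finset X24) ({1,2,5,8,21} : Finset X24) (golay_of_alt (by decide)) (by decide) (by decide) (by decide)
          (by intro z hz
              rcases (by decide : ∀ w : X24, w ∈ ({1,2,5,8,21} : Finset X24) → w = 1 ∨ w = 2 ∨ w = 5 ∨ w = 8 ∨ w = 21) z hz with rfl|rfl|rfl|rfl|rfl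
              · rw [e1]; decide
              · rw [e2]; decide
              · rw [e5]; decide
              · rw [e8]; decide
              · rw [e21]; decide
              )
      have m23_1 : σ 23 ∈ ({1,2,5,8,10,21,22,23} : Finset X24) := (s74 23).mp (by decide)
      have s75 : ∀ y, y ∈ ({1,2,7,8,9,13,17,23} : Finset X24) ↔ σ y ∈ ({1,2,7,8,9,13,17,23} : Finset X24) :=
        octStab hσ ({1,2,7,8,9,13,17,23} : Finset X24) ({1,2,8,9,13} : Finset X24) (golay_of_alt (by decide)) (by decide) (by decide) (by decide)
          (by intro z hz
              rcases (by decide : ∀ w : X24, w ∈ ({1,2,8,9,13} : Finset X24) → w = 1 ∨ w = 2 ∨ w = 8 ∨ w = 9 ∨ w = 13) z hz with rfl|rfl|rfl|rfl|rfl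
              · rw [e1]; decide
              · rw [e2]; decide
              · rw [e8]; decide
              · rw [e9]; decide
              · rw [e13]; decide
              )
      have m23_2 : σ 23 ∈ ({1,2,7,8,9,13,17,23} : Finset X24) := (s75 23).mp (by decide)
      have s76 : ∀ y, y ∈ ({1,5,7,12,17,18,21,23} : Finset X24) ↔ σ y ∈ ({1,5,7,12,17,18,21,23} : Finset X24) :=
        octStab hσ ({1,5,7,12,17,18,21,23} : Finset X24) ({1,5,12,18,21} : Finset X24) (golay_of_alt (by decide)) (by decide) (by decide) (by decide)
          (by intro z hz
              rcases (by decide : ∀ w : X24, w ∈ ({1,5,12,18,21} : Finset X24) → w = 1 ∨ w = 5 ∨ w = 12 ∨ w = 18 ∨ w = 21) z hz with rfl|rfl|rfl|rfl|rfl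
              · rw [e1]; decide
              · rw [e5]; decide
              · rw [e12]; decide
              · rw [e18]; decide
              · rw [e21]; decide
              )
      have m23_3 : σ 23 ∈ ({1,5,7,12,17,18,21,23} : Finset X24) := (s76 23).mp (by decide)
      have m23_4 : σ 23 ≠ 23 := fun hh => absurd (σ.injective (hh.trans e1.symm)) (by decide)
      have e23 : σ 23 = 1 := (by decide : ∀ w : X24, w ∈ ({1,2,5,8,10,21,22,23} : Finset X24) → w ∈ ({1,2,7,8,9,13,17,23} : Finset X24) → w ∈ ({1,5,7,12,17,18,21,23} : Finset X24) → w ≠ 23 → w = 1) _ m23_1 m23_2 m23_3 m23_4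
      have s77 : ∀ y, y ∈ ({1,2,3,13,18,20,21,23} : Finset X24) ↔ σ y ∈ ({1,2,3,13,18,20,21,23} : Finset X24) :=
        octStab hσ ({1,2,3,13,18,20,21,23} : Finset X24) ({1,2,13,18,23} : Finset X24) (golay_of_alt (by decide)) (by decide) (by decide) (by decide)
          (by intro z hz
              rcases (by decide : ∀ w : X24, w ∈ ({1,2,13,18,23} : Finset X24) → w = 1 ∨ w = 2 ∨ w = 13 ∨ w = 18 ∨ w = 23) z hz with rfl|rfl|rfl|rfl|rfl
              · rw [e1]; decide
              · rw [e2]; decide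
              · rw [e13]; decide
              · rw [e18]; decide
              · rw [e23]; decide
              )
      exact absurd ((s77 5).mpr (by rw [e5]; decide)) (by decide)

lemma pinAll {σ : Equiv.Perm X24} (hσ : σ ∈ M24) (hD : ∀ z, z ∈ Dset ↔ σ z ∈ Dset)
    (hfix : ∀ z ∈ Dset, σ z = z) : σ = 1 := by
  have e0 : σ 0 = 0 := sigma_zero hσ
  have e1 : σ 1 = 1 := hfix 1 (by decide)
  have e2 : σ 2 = 2 := hfix 2 (by decide)
  have e3 : σ 3 = 3 := hfix 3 (by decide)
  have e4 : σ 4 = 4 := hfix 4 (by decide)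
  have e6 : σ 6 = 6 := hfix 6 (by decide)
  have e8 : σ 8 = 8 := hfix 8 (by decide)
  have e9 : σ 9 = 9 := hfix 9 (by decide)
  have e12 : σ 12 = 12 := hfix 12 (by decide)
  have e13 : σ 13 = 13 := hfix 13 (by decide)
  have e16 : σ 16 = 16 := hfix 16 (by decide)
  have e18 : σ 18 = 18 := hfix 18 (by decide)
  have e23 : σ 23 = 23 := hfix 23 (by decide)
  have s78 : ∀ y, y ∈ ({1,2,3,4,5,8,11,13} : Finset X24) ↔ σ y ∈ ({1,2,3,4,5,8,11,13} : Finset X24) :=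
    octStab hσ ({1,2,3,4,5,8,11,13} : Finset X24) ({1,2,3,4,8} : Finset X24) (golay_of_alt (by decide)) (by decide) (by decide) (by decide)
      (by intro z hz
          rcases (by decide : ∀ w : X24, w ∈ ({1,2,3,4,8} : Finset X24) → w = 1 ∨ w = 2 ∨ w = 3 ∨ w = 4 ∨ w = 8) z hz with rfl|rfl|rfl|rfl|rfl
          · rw [e1]; decide
          · rw [e2]; decide
          · rw [e3]; decide
          · rw [e4]; decide
          · rw [e8]; decide
          )
  have m5_1 : σ 5 ∈ ({1,2,3,4,5,8,11,13} : Finset X24) := (s78 5).mp (by decide)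
  have s79 : ∀ y, y ∈ ({1,2,3,5,12,16,18,22} : Finset X24) ↔ σ y ∈ ({1,2,3,5,12,16,18,22} : Finset X24) :=
    octStab hσ ({1,2,3,5,12,16,18,22} : Finset X24) ({1,2,3,12,16} : Finset X24) (golay_of_alt (by decide)) (by decide) (by decide) (by decide)
      (by intro z hz
          rcases (by decide : ∀ w : X24, w ∈ ({1,2,3,12,16} : Finset X24) → w = 1 ∨ w = 2 ∨ w = 3 ∨ w = 12 ∨ w = 16) z hz with rfl|rfl|rfl|rfl|rfl
          · rw [e1]; decide
          · rw [e2]; decide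
          · rw [e3]; decide
          · rw [e12]; decide
          · rw [e16]; decide
          )
  have m5_2 : σ 5 ∈ ({1,2,3,5,12,16,18,22} : Finset X24) := (s79 5).mp (by decide)
  have s80 : ∀ y, y ∈ ({1,2,4,5,9,18,19,23} : Finset X24) ↔ σ y ∈ ({1,2,4,5,9,18,19,23} : Finset X24) :=
    octStab hσ ({1,2,4,5,9,18,19,23} : Finset X24) ({1,2,4,9,18} : Finset X24) (golay_of_alt (by decide)) (by decide) (by decide) (by decide)
      (by intro z hz
          rcases (by decide : ∀ w : X24, w ∈ ({1,2,4,9,18} : Finset X24) → w = 1 ∨ w = 2 ∨ w = 4 ∨ w = 9 ∨ w = 18) z hz with rfl|rfl|rfl|rfl|rfl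
          · rw [e1]; decide
          · rw [e2]; decide
          · rw [e4]; decide
          · rw [e9]; decide
          · rw [e18]; decide
          )
  have m5_3 : σ 5 ∈ ({1,2,4,5,9,18,19,23} : Finset X24) := (s80 5).mp (by decide)
  have s81 : ∀ y, y ∈ ({1,3,4,5,6,16,21,23} : Finset X24) ↔ σ y ∈ ({1,3,4,5,6,16,21,23} : Finset X24) :=
    octStab hσ ({1,3,4,5,6,16,21,23} : Finset X24) ({1,3,4,6,16} : Finset X24) (golay_of_alt (by decide)) (by decide) (by decide) (by decide)
      (by intro z hz
          rcases (by decide : ∀ w : X24, w ∈ ({1,3,4,6,16} : Finset X24) → w = 1 ∨ w = 3 ∨ w = 4 ∨ w = 6 ∨ w = 16) z hz with rfl|rfl|rfl|rfl|rfl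
          · rw [e1]; decide
          · rw [e3]; decide
          · rw [e4]; decide
          · rw [e6]; decide
          · rw [e16]; decide
          )
  have m5_4 : σ 5 ∈ ({1,3,4,5,6,16,21,23} : Finset X24) := (s81 5).mp (by decide)
  have s82 : ∀ y, y ∈ ({2,3,4,5,6,9,12,14} : Finset X24) ↔ σ y ∈ ({2,3,4,5,6,9,12,14} : Finset X24) :=
    octStab hσ ({2,3,4,5,6,9,12,14} : Finset X24) ({2,3,4,6,9} : Finset X24) (golay_of_alt (by decide)) (by decide) (by decide) (by decide)
      (by intro z hz
          rcases (by decide : ∀ w : X24, w ∈ ({2,3,4,6,9} : Finset X24) → w = 2 ∨ w = 3 ∨ w = 4 ∨ w = 6 ∨ w = 9) z hz with rfl|rfl|rfl|rfl|rfl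
          · rw [e2]; decide
          · rw [e3]; decide
          · rw [e4]; decide
          · rw [e6]; decide
          · rw [e9]; decide
          )
  have m5_5 : σ 5 ∈ ({2,3,4,5,6,9,12,14} : Finset X24) := (s82 5).mp (by decide)
  have e5 : σ 5 = 5 := (by decide : ∀ w : X24, w ∈ ({1,2,3,4,5,8,11,13} : Finset X24) → w ∈ ({1,2,3,5,12,16,18,22} : Finset X24) → w ∈ ({1,2,4,5,9,18,19,23} : Finset X24) → w ∈ ({1,3,4,5,6,16,21,23} : Finset X24) → w ∈ ({2,3,4,5,6,9,12,14} : Finset X24) → w = 5) _ m5_1 m5_2 m5_3 m5_4 m5_5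
  have s83 : ∀ y, y ∈ ({1,2,3,4,7,10,12,23} : Finset X24) ↔ σ y ∈ ({1,2,3,4,7,10,12,23} : Finset X24) :=
    octStab hσ ({1,2,3,4,7,10,12,23} : Finset X24) ({1,2,3,4,12} : Finset X24) (golay_of_alt (by decide)) (by decide) (by decide) (by decide)
      (by intro z hz
          rcases (by decide : ∀ w : X24, w ∈ ({1,2,3,4,12} : Finset X24) → w = 1 ∨ w = 2 ∨ w = 3 ∨ w = 4 ∨ w = 12) z hz with rfl|rfl|rfl|rfl|rfl
          · rw [e1]; decide
          · rw [e2]; decide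
          · rw [e3]; decide
          · rw [e4]; decide
          · rw [e12]; decide
          )
  have m7_1 : σ 7 ∈ ({1,2,3,4,7,10,12,23} : Finset X24) := (s83 7).mp (by decide)
  have s84 : ∀ y, y ∈ ({1,2,3,5,7,9,15,21} : Finset X24) ↔ σ y ∈ ({1,2,3,5,7,9,15,21} : Finset X24) :=
    octStab hσ ({1,2,3,5,7,9,15,21} : Finset X24) ({1,2,3,5,9} : Finset X24) (golay_of_alt (by decide)) (by decide) (by decide) (by decide)
      (by intro z hz
          rcases (by decide : ∀ w : X24, w ∈ ({1,2,3,5,9} : Finset X24) → w = 1 ∨ w = 2 ∨ w = 3 ∨ w = 5 ∨ w = 9) z hz with rfl|rfl|rfl|rfl|rfl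
          · rw [e1]; decide
          · rw [e2]; decide
          · rw [e3]; decide
          · rw [e5]; decide
          · rw [e9]; decide
          )
  have m7_2 : σ 7 ∈ ({1,2,3,5,7,9,15,21} : Finset X24) := (s84 7).mp (by decide)
  have s85 : ∀ y, y ∈ ({1,2,4,5,6,7,17,22} : Finset X24) ↔ σ y ∈ ({1,2,4,5,6,7,17,22} : Finset X24) :=
    octStab hσ ({1,2,4,5,6,7,17,22} : Finset X24) ({1,2,4,5,6} : Finset X24) (golay_of_alt (by decide)) (by decide) (by decide) (by decide)
      (by intro z hz
          rcases (by decide : ∀ w : X24, w ∈ ({1,2,4,5,6} : Finset X24) → w = 1 ∨ w = 2 ∨ w = 4 ∨ w = 5 ∨ w = 6) z hz with rfl|rfl|rfl|rfl|rfl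
          · rw [e1]; decide
          · rw [e2]; decide
          · rw [e4]; decide
          · rw [e5]; decide
          · rw [e6]; decide
          )
  have m7_3 : σ 7 ∈ ({1,2,4,5,6,7,17,22} : Finset X24) := (s85 7).mp (by decide)
  have s86 : ∀ y, y ∈ ({1,3,4,5,7,14,18,20} : Finset X24) ↔ σ y ∈ ({1,3,4,5,7,14,18,20} : Finset X24) :=
    octStab hσ ({1,3,4,5,7,14,18,20} : Finset X24) ({1,3,4,5,18} : Finset X24) (golay_of_alt (by decide)) (by decide) (by decide) (by decide)
      (by intro z hz
          rcases (by decide : ∀ w : X24, w ∈ ({1,3,4,5,18} : Finset X24) → w = 1 ∨ w = 3 ∨ w = 4 ∨ w = 5 ∨ w = 18) z hz with rfl|rfl|rfl|rfl|rfl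
          · rw [e1]; decide
          · rw [e3]; decide
          · rw [e4]; decide
          · rw [e5]; decide
          · rw [e18]; decide
          )
  have m7_4 : σ 7 ∈ ({1,3,4,5,7,14,18,20} : Finset X24) := (s86 7).mp (by decide)
  have s87 : ∀ y, y ∈ ({2,3,4,5,7,16,19,24} : Finset X24) ↔ σ y ∈ ({2,3,4,5,7,16,19,24} : Finset X24) :=
    octStab hσ ({2,3,4,5,7,16,19,24} : Finset X24) ({2,3,4,5,16} : Finset X24) (golay_of_alt (by decide)) (by decide) (by decide) (by decide)
      (by intro z hz
          rcases (by decide : ∀ w : X24, w ∈ ({2,3,4,5,16} : Finset X24) → w = 2 ∨ w = 3 ∨ w = 4 ∨ w = 5 ∨ w = 16) z hz with rfl|rfl|rfl|rfl|rfl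
          · rw [e2]; decide
          · rw [e3]; decide
          · rw [e4]; decide
          · rw [e5]; decide
          · rw [e16]; decide
          )
  have m7_5 : σ 7 ∈ ({2,3,4,5,7,16,19,24} : Finset X24) := (s87 7).mp (by decide)
  have e7 : σ 7 = 7 := (by decide : ∀ w : X24, w ∈ ({1,2,3,4,7,10,12,23} : Finset X24) → w ∈ ({1,2,3,5,7,9,15,21} : Finset X24) → w ∈ ({1,2,4,5,6,7,17,22} : Finset X24) → w ∈ ({1,3,4,5,7,14,18,20} : Finset X24) → w ∈ ({2,3,4,5,7,16,19,24} : Finset X24) → w = 7) _ m7_1 m7_2 m7_3 m7_4 m7_5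
  have m10_1 : σ 10 ∈ ({1,2,3,4,7,10,12,23} : Finset X24) := (s83 10).mp (by decide)
  have s88 : ∀ y, y ∈ ({1,2,3,5,6,10,19,20} : Finset X24) ↔ σ y ∈ ({1,2,3,5,6,10,19,20} : Finset X24) :=
    octStab hσ ({1,2,3,5,6,10,19,20} : Finset X24) ({1,2,3,5,6} : Finset X24) (golay_of_alt (by decide)) (by decide) (by decide) (by decide)
      (by intro z hz
          rcases (by decide : ∀ w : X24, w ∈ ({1,2,3,5,6} : Finset X24) → w = 1 ∨ w = 2 ∨ w = 3 ∨ w = 5 ∨ w = 6) z hz with rfl|rfl|rfl|rfl|rfl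
          · rw [e1]; decide
          · rw [e2]; decide
          · rw [e3]; decide
          · rw [e5]; decide
          · rw [e6]; decide
          )
  have m10_2 : σ 10 ∈ ({1,2,3,5,6,10,19,20} : Finset X24) := (s88 10).mp (by decide)
  have s89 : ∀ y, y ∈ ({1,2,4,5,10,14,15,16} : Finset X24) ↔ σ y ∈ ({1,2,4,5,10,14,15,16} : Finset X24) :=
    octStab hσ ({1,2,4,5,10,14,15,16} : Finset X24) ({1,2,4,5,16} : Finset X24) (golay_of_alt (by decide)) (by decide) (by decide) (by decide)
      (by intro z hz
          rcases (by decide : ∀ w : X24, w ∈ ({1,2,4,5,16} : Finset X24) → w = 1 ∨ w = 2 ∨ w = 4 ∨ w = 5 ∨ w = 16) z hz with rfl|rfl|rfl|rfl|rfl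
          · rw [e1]; decide
          · rw [e2]; decide
          · rw [e4]; decide
          · rw [e5]; decide
          · rw [e16]; decide
          )
  have m10_3 : σ 10 ∈ ({1,2,4,5,10,14,15,16} : Finset X24) := (s89 10).mp (by decide)
  have s90 : ∀ y, y ∈ ({1,3,4,5,9,10,22,24} : Finset X24) ↔ σ y ∈ ({1,3,4,5,9,10,22,24} : Finset X24) :=
    octStab hσ ({1,3,4,5,9,10,22,24} : Finset X24) ({1,3,4,5,9} : Finset X24) (golay_of_alt (by decide)) (by decide) (by decide) (by decide)
      (by intro z hz
          rcases (by decide : ∀ w : X24, w ∈ ({1,3,4,5,9} : Finset X24) → w = 1 ∨ w = 3 ∨ w = 4 ∨ w = 5 ∨ w = 9) z hz with rfl|rfl|rfl|rfl|rfl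
          · rw [e1]; decide
          · rw [e3]; decide
          · rw [e4]; decide
          · rw [e5]; decide
          · rw [e9]; decide
          )
  have m10_4 : σ 10 ∈ ({1,3,4,5,9,10,22,24} : Finset X24) := (s90 10).mp (by decide)
  have s91 : ∀ y, y ∈ ({2,3,4,5,10,17,18,21} : Finset X24) ↔ σ y ∈ ({2,3,4,5,10,17,18,21} : Finset X24) :=
    octStab hσ ({2,3,4,5,10,17,18,21} : Finset X24) ({2,3,4,5,18} : Finset X24) (golay_of_alt (by decide)) (by decide) (by decide) (by decide)
      (by intro z hz
          rcases (by decide : ∀ w : X24, w ∈ ({2,3,4,5,18} : Finset X24) → w = 2 ∨ w = 3 ∨ w = 4 ∨ w = 5 ∨ w = 18) z hz with rfl|rfl|rfl|rfl|rfl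
          · rw [e2]; decide
          · rw [e3]; decide
          · rw [e4]; decide
          · rw [e5]; decide
          · rw [e18]; decide
          )
  have m10_5 : σ 10 ∈ ({2,3,4,5,10,17,18,21} : Finset X24) := (s91 10).mp (by decide)
  have e10 : σ 10 = 10 := (by decide : ∀ w : X24, w ∈ ({1,2,3,4,7,10,12,23} : Finset X24) → w ∈ ({1,2,3,5,6,10,19,20} : Finset X24) → w ∈ ({1,2,4,5,10,14,15,16} : Finset X24) → w ∈ ({1,3,4,5,9,10,22,24} : Finset X24) → w ∈ ({2,3,4,5,10,17,18,21} : Finset X24) → w = 10) _ m10_1 m10_2 m10_3 m10_4 m10_5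
  have m11_1 : σ 11 ∈ ({1,2,3,4,5,8,11,13} : Finset X24) := (s78 11).mp (by decide)
  have s92 : ∀ y, y ∈ ({1,2,3,6,9,11,22,23} : Finset X24) ↔ σ y ∈ ({1,2,3,6,9,11,22,23} : Finset X24) :=
    octStab hσ ({1,2,3,6,9,11,22,23} : Finset X24) ({1,2,3,6,9} : Finset X24) (golay_of_alt (by decide)) (by decide) (by decide) (by decide)
      (by intro z hz
          rcases (by decide : ∀ w : X24, w ∈ ({1,2,3,6,9} : Finset X24) → w = 1 ∨ w = 2 ∨ w = 3 ∨ w = 6 ∨ w = 9) z hz with rfl|rfl|rfl|rfl|rfl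
          · rw [e1]; decide
          · rw [e2]; decide
          · rw [e3]; decide
          · rw [e6]; decide
          · rw [e9]; decide
          )
  have m11_2 : σ 11 ∈ ({1,2,3,6,9,11,22,23} : Finset X24) := (s92 11).mp (by decide)
  have s93 : ∀ y, y ∈ ({1,2,4,6,11,12,16,19} : Finset X24) ↔ σ y ∈ ({1,2,4,6,11,12,16,19} : Finset X24) :=
    octStab hσ ({1,2,4,6,11,12,16,19} : Finset X24) ({1,2,4,6,12} : Finset X24) (golay_of_alt (by decide)) (by decide) (by decide) (by decide)
      (by intro z hz
          rcases (by decide : ∀ w : X24, w ∈ ({1,2,4,6,12} : Finset X24) → w = 1 ∨ w = 2 ∨ w = 4 ∨ w = 6 ∨ w = 12) z hz with rfl|rfl|rfl|rfl|rfl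
          · rw [e1]; decide
          · rw [e2]; decide
          · rw [e4]; decide
          · rw [e6]; decide
          · rw [e12]; decide
          )
  have m11_3 : σ 11 ∈ ({1,2,4,6,11,12,16,19} : Finset X24) := (s93 11).mp (by decide)
  have s94 : ∀ y, y ∈ ({1,3,4,6,10,11,14,17} : Finset X24) ↔ σ y ∈ ({1,3,4,6,10,11,14,17} : Finset X24) :=
    octStab hσ ({1,3,4,6,10,11,14,17} : Finset X24) ({1,3,4,6,10} : Finset X24) (golay_of_alt (by decide)) (by decide) (by decide) (by decide)
      (by intro z hz
          rcases (by decide : ∀ w : X24, w ∈ ({1,3,4,6,10} : Finset X24) → w = 1 ∨ w = 3 ∨ w = 4 ∨ w = 6 ∨ w = 10) z hz with rfl|rfl|rfl|rfl|rfl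
          · rw [e1]; decide
          · rw [e3]; decide
          · rw [e4]; decide
          · rw [e6]; decide
          · rw [e10]; decide
          )
  have m11_4 : σ 11 ∈ ({1,3,4,6,10,11,14,17} : Finset X24) := (s94 11).mp (by decide)
  have s95 : ∀ y, y ∈ ({2,3,4,6,7,11,20,21} : Finset X24) ↔ σ y ∈ ({2,3,4,6,7,11,20,21} : Finset X24) :=
    octStab hσ ({2,3,4,6,7,11,20,21} : Finset X24) ({2,3,4,6,7} : Finset X24) (golay_of_alt (by decide)) (by decide) (by decide) (by decide)
      (by intro z hz
          rcases (by decide : ∀ w : X24, w ∈ ({2,3,4,6,7} : Finset X24) → w = 2 ∨ w = 3 ∨ w = 4 ∨ w = 6 ∨ w = 7) z hz with rfl|rfl|rfl|rfl|rfl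
          · rw [e2]; decide
          · rw [e3]; decide
          · rw [e4]; decide
          · rw [e6]; decide
          · rw [e7]; decide
          )
  have m11_5 : σ 11 ∈ ({2,3,4,6,7,11,20,21} : Finset X24) := (s95 11).mp (by decide)
  have e11 : σ 11 = 11 := (by decide : ∀ w : X24, w ∈ ({1,2,3,4,5,8,11,13} : Finset X24) → w ∈ ({1,2,3,6,9,11,22,23} : Finset X24) → w ∈ ({1,2,4,6,11,12,16,19} : Finset X24) → w ∈ ({1,3,4,6,10,11,14,17} : Finset X24) → w ∈ ({2,3,4,6,7,11,20,21} : Finset X24) → w = 11) _ m11_1 m11_2 m11_3 m11_4 m11_5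
  have s96 : ∀ y, y ∈ ({1,2,3,5,14,17,23,24} : Finset X24) ↔ σ y ∈ ({1,2,3,5,14,17,23,24} : Finset X24) :=
    octStab hσ ({1,2,3,5,14,17,23,24} : Finset X24) ({1,2,3,5,23} : Finset X24) (golay_of_alt (by decide)) (by decide) (by decide) (by decide)
      (by intro z hz
          rcases (by decide : ∀ w : X24, w ∈ ({1,2,3,5,23} : Finset X24) → w = 1 ∨ w = 2 ∨ w = 3 ∨ w = 5 ∨ w = 23) z hz with rfl|rfl|rfl|rfl|rfl
          · rw [e1]; decide
          · rw [e2]; decide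
          · rw [e3]; decide
          · rw [e5]; decide
          · rw [e23]; decide
          )
  have m14_1 : σ 14 ∈ ({1,2,3,5,14,17,23,24} : Finset X24) := (s96 14).mp (by decide)
  have s97 : ∀ y, y ∈ ({1,2,3,6,7,13,14,16} : Finset X24) ↔ σ y ∈ ({1,2,3,6,7,13,14,16} : Finset X24) :=
    octStab hσ ({1,2,3,6,7,13,14,16} : Finset X24) ({1,2,3,6,7} : Finset X24) (golay_of_alt (by decide)) (by decide) (by decide) (by decide)
      (by intro z hz
          rcases (by decide : ∀ w : X24, w ∈ ({1,2,3,6,7} : Finset X24) → w = 1 ∨ w = 2 ∨ w = 3 ∨ w = 6 ∨ w = 7) z hz with rfl|rfl|rfl|rfl|rfl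
          · rw [e1]; decide
          · rw [e2]; decide
          · rw [e3]; decide
          · rw [e6]; decide
          · rw [e7]; decide
          )
  have m14_2 : σ 14 ∈ ({1,2,3,6,7,13,14,16} : Finset X24) := (s97 14).mp (by decide)
  have m14_3 : σ 14 ∈ ({1,2,4,5,10,14,15,16} : Finset X24) := (s89 14).mp (by decide)
  have m14_4 : σ 14 ∈ ({1,3,4,5,7,14,18,20} : Finset X24) := (s86 14).mp (by decide)
  have m14_5 : σ 14 ∈ ({2,3,4,5,6,9,12,14} : Finset X24) := (s82 14).mp (by decide)
  have e14 : σ 14 = 14 := (by decide : ∀ w : X24, w ∈ ({1,2,3,5,14,17,23,24} : Finset X24) → w ∈ ({1,2,3,6,7,13,14,16} : Finset X24) → w ∈ ({1,2,4,5,10,14,15,16} : Finset X24) → w ∈ ({1,3,4,5,7,14,18,20} : Finset X24) → w ∈ ({2,3,4,5,6,9,12,14} : Finset X24) → w = 14) _ m14_1 m14_2 m14_3 m14_4 m14_5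
  have s98 : ∀ y, y ∈ ({1,2,3,4,6,15,18,24} : Finset X24) ↔ σ y ∈ ({1,2,3,4,6,15,18,24} : Finset X24) :=
    octStab hσ ({1,2,3,4,6,15,18,24} : Finset X24) ({1,2,3,4,6} : Finset X24) (golay_of_alt (by decide)) (by decide) (by decide) (by decide)
      (by intro z hz
          rcases (by decide : ∀ w : X24, w ∈ ({1,2,3,4,6} : Finset X24) → w = 1 ∨ w = 2 ∨ w = 3 ∨ w = 4 ∨ w = 6) z hz with rfl|rfl|rfl|rfl|rfl
          · rw [e1]; decide
          · rw [e2]; decide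
          · rw [e3]; decide
          · rw [e4]; decide
          · rw [e6]; decide
          )
  have m15_1 : σ 15 ∈ ({1,2,3,4,6,15,18,24} : Finset X24) := (s98 15).mp (by decide)
  have m15_2 : σ 15 ∈ ({1,2,3,5,7,9,15,21} : Finset X24) := (s84 15).mp (by decide)
  have m15_3 : σ 15 ∈ ({1,2,4,5,10,14,15,16} : Finset X24) := (s89 15).mp (by decide)
  have s99 : ∀ y, y ∈ ({1,3,4,5,12,15,17,19} : Finset X24) ↔ σ y ∈ ({1,3,4,5,12,15,17,19} : Finset X24) :=
    octStab hσ ({1,3,4,5,12,15,17,19} : Finset X24) ({1,3,4,5,12} : Finset X24) (golay_of_alt (by decide)) (by decide) (by decide) (by decide)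
      (by intro z hz
          rcases (by decide : ∀ w : X24, w ∈ ({1,3,4,5,12} : Finset X24) → w = 1 ∨ w = 3 ∨ w = 4 ∨ w = 5 ∨ w = 12) z hz with rfl|rfl|rfl|rfl|rfl
          · rw [e1]; decide
          · rw [e3]; decide
          · rw [e4]; decide
          · rw [e5]; decide
          · rw [e12]; decide
          )
  have m15_4 : σ 15 ∈ ({1,3,4,5,12,15,17,19} : Finset X24) := (s99 15).mp (by decide)
  have s100 : ∀ y, y ∈ ({2,3,4,5,15,20,22,23} : Finset X24) ↔ σ y ∈ ({2,3,4,5,15,20,22,23} : Finset X24) :=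
    octStab hσ ({2,3,4,5,15,20,22,23} : Finset X24) ({2,3,4,5,23} : Finset X24) (golay_of_alt (by decide)) (by decide) (by decide) (by decide)
      (by intro z hz
          rcases (by decide : ∀ w : X24, w ∈ ({2,3,4,5,23} : Finset X24) → w = 2 ∨ w = 3 ∨ w = 4 ∨ w = 5 ∨ w = 23) z hz with rfl|rfl|rfl|rfl|rfl
          · rw [e2]; decide
          · rw [e3]; decide
          · rw [e4]; decide
          · rw [e5]; decide
          · rw [e23]; decide
          )
  have m15_5 : σ 15 ∈ ({2,3,4,5,15,20,22,23} : Finset X24) := (s100 15).mp (by decide)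
  have e15 : σ 15 = 15 := (by decide : ∀ w : X24, w ∈ ({1,2,3,4,6,15,18,24} : Finset X24) → w ∈ ({1,2,3,5,7,9,15,21} : Finset X24) → w ∈ ({1,2,4,5,10,14,15,16} : Finset X24) → w ∈ ({1,3,4,5,12,15,17,19} : Finset X24) → w ∈ ({2,3,4,5,15,20,22,23} : Finset X24) → w = 15) _ m15_1 m15_2 m15_3 m15_4 m15_5
  have s101 : ∀ y, y ∈ ({1,2,3,4,9,16,17,20} : Finset X24) ↔ σ y ∈ ({1,2,3,4,9,16,17,20} : Finset X24) :=
    octStab hσ ({1,2,3,4,9,16,17,20} : Finset X24) ({1,2,3,4,9} : Finset X24) (golay_of_alt (by decide)) (by decide) (by decide) (by decide)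
      (by intro z hz
          rcases (by decide : ∀ w : X24, w ∈ ({1,2,3,4,9} : Finset X24) → w = 1 ∨ w = 2 ∨ w = 3 ∨ w = 4 ∨ w = 9) z hz with rfl|rfl|rfl|rfl|rfl
          · rw [e1]; decide
          · rw [e2]; decide
          · rw [e3]; decide
          · rw [e4]; decide
          · rw [e9]; decide
          )
  have m17_1 : σ 17 ∈ ({1,2,3,4,9,16,17,20} : Finset X24) := (s101 17).mp (by decide)
  have m17_2 : σ 17 ∈ ({1,2,3,5,14,17,23,24} : Finset X24) := (s96 17).mp (by decide)
  have m17_3 : σ 17 ∈ ({1,2,4,5,6,7,17,22} : Finset X24) := (s85 17).mp (by decide)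
  have m17_4 : σ 17 ∈ ({1,3,4,5,12,15,17,19} : Finset X24) := (s99 17).mp (by decide)
  have m17_5 : σ 17 ∈ ({2,3,4,5,10,17,18,21} : Finset X24) := (s91 17).mp (by decide)
  have e17 : σ 17 = 17 := (by decide : ∀ w : X24, w ∈ ({1,2,3,4,9,16,17,20} : Finset X24) → w ∈ ({1,2,3,5,14,17,23,24} : Finset X24) → w ∈ ({1,2,4,5,6,7,17,22} : Finset X24) → w ∈ ({1,3,4,5,12,15,17,19} : Finset X24) → w ∈ ({2,3,4,5,10,17,18,21} : Finset X24) → w = 17) _ m17_1 m17_2 m17_3 m17_4 m17_5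
  have s102 : ∀ y, y ∈ ({1,2,3,4,14,19,21,22} : Finset X24) ↔ σ y ∈ ({1,2,3,4,14,19,21,22} : Finset X24) :=
    octStab hσ ({1,2,3,4,14,19,21,22} : Finset X24) ({1,2,3,4,14} : Finset X24) (golay_of_alt (by decide)) (by decide) (by decide) (by decide)
      (by intro z hz
          rcases (by decide : ∀ w : X24, w ∈ ({1,2,3,4,14} : Finset X24) → w = 1 ∨ w = 2 ∨ w = 3 ∨ w = 4 ∨ w = 14) z hz with rfl|rfl|rfl|rfl|rfl
          · rw [e1]; decide
          · rw [e2]; decide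
          · rw [e3]; decide
          · rw [e4]; decide
          · rw [e14]; decide
          )
  have m19_1 : σ 19 ∈ ({1,2,3,4,14,19,21,22} : Finset X24) := (s102 19).mp (by decide)
  have m19_2 : σ 19 ∈ ({1,2,3,5,6,10,19,20} : Finset X24) := (s88 19).mp (by decide)
  have m19_3 : σ 19 ∈ ({1,2,4,5,9,18,19,23} : Finset X24) := (s80 19).mp (by decide)
  have m19_4 : σ 19 ∈ ({1,3,4,5,12,15,17,19} : Finset X24) := (s99 19).mp (by decide)
  have m19_5 : σ 19 ∈ ({2,3,4,5,7,16,19,24} : Finset X24) := (s87 19).mp (by decide)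
  have e19 : σ 19 = 19 := (by decide : ∀ w : X24, w ∈ ({1,2,3,4,14,19,21,22} : Finset X24) → w ∈ ({1,2,3,5,6,10,19,20} : Finset X24) → w ∈ ({1,2,4,5,9,18,19,23} : Finset X24) → w ∈ ({1,3,4,5,12,15,17,19} : Finset X24) → w ∈ ({2,3,4,5,7,16,19,24} : Finset X24) → w = 19) _ m19_1 m19_2 m19_3 m19_4 m19_5
  have m20_1 : σ 20 ∈ ({1,2,3,4,9,16,17,20} : Finset X24) := (s101 20).mp (by decide)
  have m20_2 : σ 20 ∈ ({1,2,3,5,6,10,19,20} : Finset X24) := (s88 20).mp (by decide)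
  have s103 : ∀ y, y ∈ ({1,2,4,5,12,20,21,24} : Finset X24) ↔ σ y ∈ ({1,2,4,5,12,20,21,24} : Finset X24) :=
    octStab hσ ({1,2,4,5,12,20,21,24} : Finset X24) ({1,2,4,5,12} : Finset X24) (golay_of_alt (by decide)) (by decide) (by decide) (by decide)
      (by intro z hz
          rcases (by decide : ∀ w : X24, w ∈ ({1,2,4,5,12} : Finset X24) → w = 1 ∨ w = 2 ∨ w = 4 ∨ w = 5 ∨ w = 12) z hz with rfl|rfl|rfl|rfl|rfl
          · rw [e1]; decide
          · rw [e2]; decide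
          · rw [e4]; decide
          · rw [e5]; decide
          · rw [e12]; decide
          )
  have m20_3 : σ 20 ∈ ({1,2,4,5,12,20,21,24} : Finset X24) := (s103 20).mp (by decide)
  have m20_4 : σ 20 ∈ ({1,3,4,5,7,14,18,20} : Finset X24) := (s86 20).mp (by decide)
  have m20_5 : σ 20 ∈ ({2,3,4,5,15,20,22,23} : Finset X24) := (s100 20).mp (by decide)
  have e20 : σ 20 = 20 := (by decide : ∀ w : X24, w ∈ ({1,2,3,4,9,16,17,20} : Finset X24) → w ∈ ({1,2,3,5,6,10,19,20} : Finset X24) → w ∈ ({1,2,4,5,12,20,21,24} : Finset X24) → w ∈ ({1,3,4,5,7,14,18,20} : Finset X24) → w ∈ ({2,3,4,5,15,20,22,23} : Finset X24) → w = 20) _ m20_1 m20_2 m20_3 m20_4 m20_5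
  have m21_1 : σ 21 ∈ ({1,2,3,4,14,19,21,22} : Finset X24) := (s102 21).mp (by decide)
  have m21_2 : σ 21 ∈ ({1,2,3,5,7,9,15,21} : Finset X24) := (s84 21).mp (by decide)
  have m21_3 : σ 21 ∈ ({1,2,4,5,12,20,21,24} : Finset X24) := (s103 21).mp (by decide)
  have m21_4 : σ 21 ∈ ({1,3,4,5,6,16,21,23} : Finset X24) := (s81 21).mp (by decide)
  have m21_5 : σ 21 ∈ ({2,3,4,5,10,17,18,21} : Finset X24) := (s91 21).mp (by decide)
  have e21 : σ 21 = 21 := (by decide : ∀ w : X24, w ∈ ({1,2,3,4,14,19,21,22} : Finset X24) → w ∈ ({1,2,3,5,7,9,15,21} : Finset X24) → w ∈ ({1,2,4,5,12,20,21,24} : Finset X24) → w ∈ ({1,3,4,5,6,16,21,23} : Finset X24) → w ∈ ({2,3,4,5,10,17,18,21} : Finset X24) → w = 21) _ m21_1 m21_2 m21_3 m21_4 m21_5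
  have m22_1 : σ 22 ∈ ({1,2,3,4,14,19,21,22} : Finset X24) := (s102 22).mp (by decide)
  have m22_2 : σ 22 ∈ ({1,2,3,5,12,16,18,22} : Finset X24) := (s79 22).mp (by decide)
  have m22_3 : σ 22 ∈ ({1,2,4,5,6,7,17,22} : Finset X24) := (s85 22).mp (by decide)
  have m22_4 : σ 22 ∈ ({1,3,4,5,9,10,22,24} : Finset X24) := (s90 22).mp (by decide)
  have m22_5 : σ 22 ∈ ({2,3,4,5,15,20,22,23} : Finset X24) := (s100 22).mp (by decide)
  have e22 : σ 22 = 22 := (by decide : ∀ w : X24, w ∈ ({1,2,3,4,14,19,21,22} : Finset X24) → w ∈ ({1,2,3,5,12,16,18,22} : Finset X24) → w ∈ ({1,2,4,5,6,7,17,22} : Finset X24) → w ∈ ({1,3,4,5,9,10,22,24} : Finset X24) → w ∈ ({2,3,4,5,15,20,22,23} : Finset X24) → w = 22) _ m22_1 m22_2 m22_3 m22_4 m22_5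
  have m24_1 : σ 24 ∈ ({1,2,3,4,6,15,18,24} : Finset X24) := (s98 24).mp (by decide)
  have m24_2 : σ 24 ∈ ({1,2,3,5,14,17,23,24} : Finset X24) := (s96 24).mp (by decide)
  have m24_3 : σ 24 ∈ ({1,2,4,5,12,20,21,24} : Finset X24) := (s103 24).mp (by decide)
  have m24_4 : σ 24 ∈ ({1,3,4,5,9,10,22,24} : Finset X24) := (s90 24).mp (by decide)
  have m24_5 : σ 24 ∈ ({2,3,4,5,7,16,19,24} : Finset X24) := (s87 24).mp (by decide)
  have e24 : σ 24 = 24 := (by decide : ∀ w : X24, w ∈ ({1,2,3,4,6,15,18,24} : Finset X24) → w ∈ ({1,2,3,5,14,17,23,24} : Finset X24) → w ∈ ({1,2,4,5,12,20,21,24} : Finset X24) → w ∈ ({1,3,4,5,9,10,22,24} : Finset X24) → w ∈ ({2,3,4,5,7,16,19,24} : Finset X24) → w = 24) _ m24_1 m24_2 m24_3 m24_4 m24_5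
  apply Equiv.ext
  intro z
  rcases (by decide : ∀ w : X24, w = 0 ∨ w = 1 ∨ w = 2 ∨ w = 3 ∨ w = 4 ∨ w = 5 ∨ w = 6 ∨ w = 7 ∨ w = 8 ∨ w = 9 ∨ w = 10 ∨ w = 11 ∨ w = 12 ∨ w = 13 ∨ w = 14 ∨ w = 15 ∨ w = 16 ∨ w = 17 ∨ w = 18 ∨ w = 19 ∨ w = 20 ∨ w = 21 ∨ w = 22 ∨ w = 23 ∨ w = 24) z with rfl|rfl|rfl|rfl|rfl|rfl|rfl|rfl|rfl|rfl|rfl|rfl|rfl|rfl|rfl|rfl|rfl|rfl|rfl|rfl|rfl|rfl|rfl|rfl|rfl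
  exacts [e0, e1, e2, e3, e4, e5, e6, e7, e8, e9, e10, e11, e12, e13, e14, e15, e16, e17, e18, e19, e20, e21, e22, e23, e24]
/-! ### The homomorphism Θ -/

def rhoInv : Fin 13 → X24 := ![0, 12, 8, 18, 13, 2, 16, 3, 23, 1, 6, 4, 9]

lemma rho_rhoInv : ∀ y : Fin 13, rho (rhoInv y) = y := by decide
lemma rhoInv_rho : ∀ x ∈ Dset, rhoInv (rho x) = x := by decide
lemma rhoInv_mem : ∀ y : Fin 13, y ≠ 0 → rhoInv y ∈ Dset := by decide
lemma rho_zero : rho 0 = 0 := by decide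
lemma rhoInv_zero : rhoInv 0 = 0 := rfl
lemma rho_inj : ∀ a ∈ Dset, ∀ b ∈ Dset, rho a = rho b → a = b := by decide

def thetaFun (σ : Equiv.Perm X24) : Fin 13 → Fin 13 := fun y => rho (σ (rhoInv y))

open Pointwise in
lemma stabD_hD {σ : Equiv.Perm X24} (hσ : σ ∈ StabD) : ∀ z, z ∈ Dset ↔ σ z ∈ Dset := by
  have hs := (Subgroup.mem_inf.mp hσ).2
  rw [MulAction.mem_stabilizer_iff] at hs
  intro z
  constructor
  · intro hz
    have h1 : σ • (z : X24) ∈ σ • (↑Dset : Set X24) := Set.smul_mem_smul_set (Finset.mem_coe.mpr hz)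
    rw [hs] at h1
    exact Finset.mem_coe.mp h1
  · intro hz
    have h1 : σ • (z : X24) ∈ σ • (↑Dset : Set X24) := by
      rw [hs]; exact Finset.mem_coe.mpr hz
    exact Finset.mem_coe.mp (Set.smul_mem_smul_set_iff.mp h1)

lemma stabD_M24 {σ : Equiv.Perm X24} (hσ : σ ∈ StabD) : σ ∈ M24 := (Subgroup.mem_inf.mp hσ).1

theorem Equiv.Perm.apply_inv_self {α : Type*} (f : Equiv.Perm α) (x : α) : f (f⁻¹ x) = x :=
  Equiv.Perm.eq_inv_iff_eq.mp rfl

theorem Equiv.Perm.inv_apply_self {α : Type*} (f : Equiv.Perm α) (x : α) : f⁻¹ (f x) = x :=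
  Equiv.Perm.inv_eq_iff_eq.mpr rfl

lemma hD_inv {σ : Equiv.Perm X24} (hD : ∀ z, z ∈ Dset ↔ σ z ∈ Dset) :
    ∀ z, z ∈ Dset ↔ σ⁻¹ z ∈ Dset := by
  intro z
  have h := hD (σ⁻¹ z)
  rw [Equiv.Perm.apply_inv_self] at h
  exact h.symm

lemma thetaFun_inv {σ : Equiv.Perm X24} (hσM : σ ∈ M24)
    (hD : ∀ z, z ∈ Dset ↔ σ z ∈ Dset) (y : Fin 13) :
    thetaFun σ⁻¹ (thetaFun σ y) = y := by
  by_cases h : y = 0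
  · subst h
    have h0 : σ 0 = 0 := sigma_zero hσM
    have h0' : σ⁻¹ 0 = 0 := by
      conv_lhs => rw [← h0]
      exact Equiv.Perm.inv_apply_self σ 0
    show rho (σ⁻¹ (rhoInv (rho (σ (rhoInv 0))))) = 0
    rw [rhoInv_zero, h0, rho_zero, rhoInv_zero, h0', rho_zero]
  · have hmem : rhoInv y ∈ Dset := rhoInv_mem y h
    have h1 : σ (rhoInv y) ∈ Dset := (hD _).mp hmem
    show rho (σ⁻¹ (rhoInv (rho (σ (rhoInv y))))) = y
    rw [rhoInv_rho _ h1, Equiv.Perm.inv_apply_self, rho_rhoInv]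

def Theta : StabD →* Equiv.Perm (Fin 13) where
  toFun σ :=
    { toFun := thetaFun ↑σ
      invFun := thetaFun ↑(σ⁻¹)
      left_inv := by
        intro y
        have h := thetaFun_inv (stabD_M24 σ.2) (stabD_hD σ.2) y
        exact h
      right_inv := by
        intro y
        have h := thetaFun_inv (stabD_M24 σ⁻¹.2) (stabD_hD σ⁻¹.2) y
        show thetaFun ↑σ (thetaFun ↑(σ⁻¹) y) = y
        have hcoe : (↑(σ⁻¹) : Equiv.Perm X24) = (↑σ)⁻¹ := rfl
        rw [hcoe] at h ⊢
        simpa using h }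
  map_one' := by
    apply Equiv.ext
    intro y
    show thetaFun 1 y = y
    show rho ((1 : Equiv.Perm X24) (rhoInv y)) = y
    rw [Equiv.Perm.one_apply, rho_rhoInv]
  map_mul' := by
    intro σ τ
    apply Equiv.ext
    intro y
    show thetaFun ((σ * τ : StabD) : Equiv.Perm X24) y
      = thetaFun (σ : Equiv.Perm X24) (thetaFun (τ : Equiv.Perm X24) y)
    have hτM := stabD_M24 τ.2
    have hτD := stabD_hD τ.2
    have hcoe : ((σ * τ : StabD) : Equiv.Perm X24) = (σ : Equiv.Perm X24) * (τ : Equiv.Perm X24) := rfl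
    simp only [thetaFun, hcoe, Equiv.Perm.mul_apply]
    by_cases h : y = 0
    · subst h
      rw [rhoInv_zero, sigma_zero hτM, rho_zero, rhoInv_zero]
    · have hmem : rhoInv y ∈ Dset := rhoInv_mem y h
      have h1 : (τ : Equiv.Perm X24) (rhoInv y) ∈ Dset := (hτD _).mp hmem
      rw [rhoInv_rho _ h1]

lemma theta_apply (σ : StabD) (y : Fin 13) :
    Theta σ y = rho ((σ : Equiv.Perm X24) (rhoInv y)) := rfl

lemma theta_spec (σ : StabD) : ∀ x ∈ Dset, Theta σ (rho x) = rho ((σ : Equiv.Perm X24) x) := by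
  intro x hx
  rw [theta_apply, rhoInv_rho _ hx]

lemma theta_zero (σ : StabD) : Theta σ 0 = 0 := by
  rw [theta_apply, rhoInv_zero, sigma_zero (stabD_M24 σ.2), rho_zero]

lemma theta_inj : Function.Injective Theta := by
  rw [injective_iff_map_eq_one]
  intro σ hσ1
  have hσM := stabD_M24 σ.2
  have hD := stabD_hD σ.2
  have hfix : ∀ z ∈ Dset, (σ : Equiv.Perm X24) z = z := by
    intro z hz
    have h1 : Theta σ (rho z) = rho z := by rw [hσ1]; rfl
    rw [theta_spec σ z hz] at h1
    exact rho_inj _ ((hD z).mp hz) _ hz h1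
  exact Subtype.ext (pinAll hσM hD hfix)
/-! ### Explicit lifts of the four generators of M12 -/

def fA : Fin 25 → Fin 25 := ![0, 9, 13, 4, 18, 19, 1, 21, 12, 3, 17, 15, 16, 6, 10, 20, 2, 7, 8, 11, 22, 5, 14, 23, 24]
def fAi : Fin 25 → Fin 25 := ![0, 6, 16, 9, 3, 21, 13, 17, 18, 1, 14, 19, 8, 2, 22, 11, 12, 10, 4, 5, 15, 7, 20, 23, 24]
def sA : Equiv.Perm X24 := ⟨fA, fAi, by decide, by decide⟩
lemma sA_M24 : sA ∈ M24 :=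
  mem_M24_of (fun i => golay_of_alt (by revert i; decide)) (fun i => golay_of_alt (by revert i; decide))
open Pointwise in
lemma sA_StabD : sA ∈ StabD := by
  refine Subgroup.mem_inf.mpr ⟨sA_M24, MulAction.mem_stabilizer_iff.mpr ?_⟩
  ext x
  rw [Set.mem_smul_set_iff_inv_smul_mem]
  show sA⁻¹ x ∈ (↑Dset : Set X24) ↔ _
  rw [Finset.mem_coe, Finset.mem_coe]
  revert x
  decide
lemma theta_sA : Theta ⟨sA, sA_StabD⟩ = pA := by
  apply Equiv.ext
  intro y
  show thetaFun sA y = pA y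
  revert y
  decide

def fB : Fin 25 → Fin 25 := ![0, 3, 18, 2, 1, 22, 6, 21, 12, 8, 20, 5, 13, 16, 19, 15, 9, 10, 4, 17, 14, 11, 7, 23, 24]
def fBi : Fin 25 → Fin 25 := ![0, 4, 3, 1, 18, 11, 6, 22, 9, 16, 17, 21, 8, 12, 20, 15, 13, 19, 2, 14, 10, 7, 5, 23, 24]
def sB : Equiv.Perm X24 := ⟨fB, fBi, by decide, by decide⟩
lemma sB_M24 : sB ∈ M24 :=
  mem_M24_of (fun i => golay_of_alt (by revert i; decide)) (fun i => golay_of_alt (by revert i; decide))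
open Pointwise in
lemma sB_StabD : sB ∈ StabD := by
  refine Subgroup.mem_inf.mpr ⟨sB_M24, MulAction.mem_stabilizer_iff.mpr ?_⟩
  ext x
  rw [Set.mem_smul_set_iff_inv_smul_mem]
  show sB⁻¹ x ∈ (↑Dset : Set X24) ↔ _
  rw [Finset.mem_coe, Finset.mem_coe]
  revert x
  decide
lemma theta_sB : Theta ⟨sB, sB_StabD⟩ = pB := by
  apply Equiv.ext
  intro y
  show thetaFun sB y = pB y
  revert y
  decide

def fC : Fin 25 → Fin 25 := ![0, 13, 8, 12, 16, 10, 23, 19, 2, 18, 5, 20, 3, 1, 21, 24, 4, 22, 9, 7, 11, 14, 17, 6, 15]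
def fCi : Fin 25 → Fin 25 := ![0, 13, 8, 12, 16, 10, 23, 19, 2, 18, 5, 20, 3, 1, 21, 24, 4, 22, 9, 7, 11, 14, 17, 6, 15]
def sC : Equiv.Perm X24 := ⟨fC, fCi, by decide, by decide⟩
lemma sC_M24 : sC ∈ M24 :=
  mem_M24_of (fun i => golay_of_alt (by revert i; decide)) (fun i => golay_of_alt (by revert i; decide))
open Pointwise in
lemma sC_StabD : sC ∈ StabD := by
  refine Subgroup.mem_inf.mpr ⟨sC_M24, MulAction.mem_stabilizer_iff.mpr ?_⟩
  ext x
  rw [Set.mem_smul_set_iff_inv_smul_mem]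
  show sC⁻¹ x ∈ (↑Dset : Set X24) ↔ _
  rw [Finset.mem_coe, Finset.mem_coe]
  revert x
  decide
lemma theta_sC : Theta ⟨sC, sC_StabD⟩ = pC := by
  apply Equiv.ext
  intro y
  show thetaFun sC y = pC y
  revert y
  decide

def fD : Fin 25 → Fin 25 := ![0, 1, 18, 4, 3, 21, 6, 22, 12, 13, 17, 11, 8, 9, 14, 15, 16, 10, 2, 20, 19, 5, 7, 23, 24]
def fDi : Fin 25 → Fin 25 := ![0, 1, 18, 4, 3, 21, 6, 22, 12, 13, 17, 11, 8, 9, 14, 15, 16, 10, 2, 20, 19, 5, 7, 23, 24]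
def sD : Equiv.Perm X24 := ⟨fD, fDi, by decide, by decide⟩
lemma sD_M24 : sD ∈ M24 :=
  mem_M24_of (fun i => golay_of_alt (by revert i; decide)) (fun i => golay_of_alt (by revert i; decide))
open Pointwise in
lemma sD_StabD : sD ∈ StabD := by
  refine Subgroup.mem_inf.mpr ⟨sD_M24, MulAction.mem_stabilizer_iff.mpr ?_⟩
  ext x
  rw [Set.mem_smul_set_iff_inv_smul_mem]
  show sD⁻¹ x ∈ (↑Dset : Set X24) ↔ _
  rw [Finset.mem_coe, Finset.mem_coe]
  revert x
  decide
lemma theta_sD : Theta ⟨sD, sD_StabD⟩ = pD := by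
  apply Equiv.ext
  intro y
  show thetaFun sD y = pD y
  revert y
  decide

/-! ### Words in the generators of M12 -/

def wgen : Fin 4 → Equiv.Perm (Fin 13) := ![pA, pB, pC, pD]
def wordPerm (l : List (Fin 4)) : Equiv.Perm (Fin 13) := (l.map wgen).prod
lemma wordPerm_mem (l : List (Fin 4)) : wordPerm l ∈ M12 := by
  induction l with
  | nil => exact one_mem _
  | cons h t ih =>
    rw [wordPerm, List.map_cons, List.prod_cons]
    refine mul_mem (Subgroup.subset_closure ?_) ih
    fin_cases h <;> simp [wgen, Set.mem_insert_iff]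

def w1 : Fin 13 → List (Fin 4) := ![[], [], [3], [1, 0, 0], [1], [0, 0], [0], [2], [2, 0, 1], [2, 1], [0, 1], [2, 0], [1, 0]]
lemma w1_spec : ∀ a : Fin 13, a ≠ 0 → wordPerm (w1 a) 1 = a ∧ wordPerm (w1 a) 0 = 0 := by decide

def w2 : Fin 13 → List (Fin 4) := ![[], [], [], [0, 2, 0, 0], [1, 3], [0, 1, 1, 0], [0, 3], [3, 2, 0, 0], [2, 0, 1, 0], [1, 2, 0, 0], [0, 1, 1, 3, 0], [0, 0, 1, 0, 0], [1, 1, 1, 0]]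
lemma w2_spec : ∀ a : Fin 13, a ≠ 0 → a ≠ 1 → wordPerm (w2 a) 2 = a ∧ wordPerm (w2 a) 0 = 0 ∧ wordPerm (w2 a) 1 = 1 := by decide

def w3 : Fin 13 → List (Fin 4) := ![[], [], [], [], [3, 1, 0, 3, 0, 0, 1], [0, 0, 1, 1, 2], [2, 0, 1, 1, 1], [2, 3, 0, 3, 2, 0], [0, 1, 2, 0, 3, 2], [1, 0, 2, 1, 0], [3, 0, 1, 0, 3, 2, 0, 2], [3, 0, 1, 0, 2, 0, 2], [1, 3, 0, 0, 3, 0, 0]]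
lemma w3_spec : ∀ a : Fin 13, a ≠ 0 → a ≠ 1 → a ≠ 2 → wordPerm (w3 a) 3 = a ∧ wordPerm (w3 a) 0 = 0 ∧ wordPerm (w3 a) 1 = 1 ∧ wordPerm (w3 a) 2 = 2 := by decide

def w4 : Fin 13 → List (Fin 4) := ![[], [], [], [], [], [3, 0, 0, 2, 3, 0, 0, 3, 0, 3], [1, 1, 0, 2, 3, 0, 2, 1], [0, 3, 1, 0, 0, 2, 1, 1], [1, 1, 1, 0, 3, 0, 0, 2, 0], [0, 0, 1, 2, 0, 0, 3, 0, 1, 0], [2, 0, 2, 3, 0, 3, 1, 1], [2, 1, 3, 0, 0, 3, 1, 0], [1, 2, 0, 0, 3, 2, 0, 0]]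
lemma w4_spec : ∀ a : Fin 13, a ≠ 0 → a ≠ 1 → a ≠ 2 → a ≠ 3 → wordPerm (w4 a) 4 = a ∧ wordPerm (w4 a) 0 = 0 ∧ wordPerm (w4 a) 1 = 1 ∧ wordPerm (w4 a) 2 = 2 ∧ wordPerm (w4 a) 3 = 3 := by decide

def w5 : Fin 13 → List (Fin 4) := ![[], [], [], [], [], [], [0, 3, 0, 2, 0, 0, 3, 1, 0, 2, 0, 0, 0], [1, 3, 0, 0, 1, 2, 0, 1, 3, 0, 0, 2], [2, 3, 0, 2, 3, 1, 0, 1, 2, 0], [2, 0, 1, 3, 0, 3, 2, 1, 0, 3, 1], [0, 0, 2, 1, 1, 0, 1, 3, 0, 2], [3, 1, 0, 2, 1, 0, 0, 3, 1, 0, 2, 1, 0, 0], [2, 0, 0, 1, 2, 0, 3, 0, 0, 2, 0, 0, 3]]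
lemma w5_spec : ∀ a : Fin 13, a ≠ 0 → a ≠ 1 → a ≠ 2 → a ≠ 3 → a ≠ 4 → wordPerm (w5 a) 5 = a ∧ wordPerm (w5 a) 0 = 0 ∧ wordPerm (w5 a) 1 = 1 ∧ wordPerm (w5 a) 2 = 2 ∧ wordPerm (w5 a) 3 = 3 ∧ wordPerm (w5 a) 4 = 4 := by decide

lemma perm_inv_map {α : Type*} {p : Equiv.Perm α} {a b : α} (h : p a = b) : p⁻¹ b = a :=
  p.injective (by rw [Equiv.Perm.apply_inv_self, h])

theorem statement16 :
    -- D is a dodecad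
    indvec Dset ∈ Golay ∧ Dset.card = 12 ∧
    -- σ ↦ ρ ∘ (σ restricted to D) ∘ ρ⁻¹ is an injective group homomorphism from the setwise
    -- stabilizer of D in M₂₄ onto M₁₂
    ∃ Θ : StabD →* Equiv.Perm (Fin 13),
      Function.Injective Θ ∧
      (∀ σ : StabD, ∀ x ∈ Dset, Θ σ (rho x) = rho ((σ : Equiv.Perm X24) x)) ∧
      Θ.range = M12 := by
  have hsub : M12 ≤ Theta.range := by
    rw [M12, Subgroup.closure_le]
    rintro x hx
    simp only [Set.mem_insert_iff, Set.mem_singleton_iff] at hx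
    rcases hx with rfl|rfl|rfl|rfl
    · exact ⟨⟨sA, sA_StabD⟩, theta_sA⟩
    · exact ⟨⟨sB, sB_StabD⟩, theta_sB⟩
    · exact ⟨⟨sC, sC_StabD⟩, theta_sC⟩
    · exact ⟨⟨sD, sD_StabD⟩, theta_sD⟩
  have hsup : Theta.range ≤ M12 := by
    rintro τ0 hτ0
    obtain ⟨σ0, rfl⟩ := MonoidHom.mem_range.mp hτ0
    -- level 1
    have ha1_0 : Theta σ0 1 ≠ 0 := fun h => absurd ((Theta σ0).injective (h.trans (theta_zero σ0).symm)) (by decide)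
    obtain ⟨u1, hu1⟩ := MonoidHom.mem_range.mp (hsub (wordPerm_mem (w1 (Theta σ0 1))))
    set σ1 : StabD := u1⁻¹ * σ0 with hσ1def
    have hth1 : Theta σ1 = (wordPerm (w1 (Theta σ0 1)))⁻¹ * Theta σ0 := by
      rw [hσ1def, map_mul, map_inv, hu1]
    have spec1 := w1_spec (Theta σ0 1) ha1_0
    have hfix1_1 : Theta σ1 (1:Fin 13) = 1 := by
      rw [hth1, Equiv.Perm.mul_apply]
      exact perm_inv_map spec1.1
    -- level 2
    have ha2_0 : Theta σ1 2 ≠ 0 := fun h => absurd ((Theta σ1).injective (h.trans (theta_zero σ1).symm)) (by decide)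
    have ha2_1 : Theta σ1 2 ≠ 1 := fun h => absurd ((Theta σ1).injective (h.trans hfix1_1.symm)) (by decide)
    obtain ⟨u2, hu2⟩ := MonoidHom.mem_range.mp (hsub (wordPerm_mem (w2 (Theta σ1 2))))
    set σ2 : StabD := u2⁻¹ * σ1 with hσ2def
    have hth2 : Theta σ2 = (wordPerm (w2 (Theta σ1 2)))⁻¹ * Theta σ1 := by
      rw [hσ2def, map_mul, map_inv, hu2]
    have spec2 := w2_spec (Theta σ1 2) ha2_0 ha2_1
    have hfix2_2 : Theta σ2 (2:Fin 13) = 2 := by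
      rw [hth2, Equiv.Perm.mul_apply]
      exact perm_inv_map spec2.1
    have hfix2_1 : Theta σ2 (1:Fin 13) = 1 := by
      rw [hth2, Equiv.Perm.mul_apply, hfix1_1]
      exact perm_inv_map spec2.2.2
    -- level 3
    have ha3_0 : Theta σ2 3 ≠ 0 := fun h => absurd ((Theta σ2).injective (h.trans (theta_zero σ2).symm)) (by decide)
    have ha3_1 : Theta σ2 3 ≠ 1 := fun h => absurd ((Theta σ2).injective (h.trans hfix2_1.symm)) (by decide)
    have ha3_2 : Theta σ2 3 ≠ 2 := fun h => absurd ((Theta σ2).injective (h.trans hfix2_2.symm)) (by decide)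
    obtain ⟨u3, hu3⟩ := MonoidHom.mem_range.mp (hsub (wordPerm_mem (w3 (Theta σ2 3))))
    set σ3 : StabD := u3⁻¹ * σ2 with hσ3def
    have hth3 : Theta σ3 = (wordPerm (w3 (Theta σ2 3)))⁻¹ * Theta σ2 := by
      rw [hσ3def, map_mul, map_inv, hu3]
    have spec3 := w3_spec (Theta σ2 3) ha3_0 ha3_1 ha3_2
    have hfix3_3 : Theta σ3 (3:Fin 13) = 3 := by
      rw [hth3, Equiv.Perm.mul_apply]
      exact perm_inv_map spec3.1
    have hfix3_1 : Theta σ3 (1:Fin 13) = 1 := by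
      rw [hth3, Equiv.Perm.mul_apply, hfix2_1]
      exact perm_inv_map spec3.2.2.1
    have hfix3_2 : Theta σ3 (2:Fin 13) = 2 := by
      rw [hth3, Equiv.Perm.mul_apply, hfix2_2]
      exact perm_inv_map spec3.2.2.2
    -- level 4
    have ha4_0 : Theta σ3 4 ≠ 0 := fun h => absurd ((Theta σ3).injective (h.trans (theta_zero σ3).symm)) (by decide)
    have ha4_1 : Theta σ3 4 ≠ 1 := fun h => absurd ((Theta σ3).injective (h.trans hfix3_1.symm)) (by decide)
    have ha4_2 : Theta σ3 4 ≠ 2 := fun h => absurd ((Theta σ3).injective (h.trans hfix3_2.symm)) (by decide)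
    have ha4_3 : Theta σ3 4 ≠ 3 := fun h => absurd ((Theta σ3).injective (h.trans hfix3_3.symm)) (by decide)
    obtain ⟨u4, hu4⟩ := MonoidHom.mem_range.mp (hsub (wordPerm_mem (w4 (Theta σ3 4))))
    set σ4 : StabD := u4⁻¹ * σ3 with hσ4def
    have hth4 : Theta σ4 = (wordPerm (w4 (Theta σ3 4)))⁻¹ * Theta σ3 := by
      rw [hσ4def, map_mul, map_inv, hu4]
    have spec4 := w4_spec (Theta σ3 4) ha4_0 ha4_1 ha4_2 ha4_3
    have hfix4_4 : Theta σ4 (4:Fin 13) = 4 := by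
      rw [hth4, Equiv.Perm.mul_apply]
      exact perm_inv_map spec4.1
    have hfix4_1 : Theta σ4 (1:Fin 13) = 1 := by
      rw [hth4, Equiv.Perm.mul_apply, hfix3_1]
      exact perm_inv_map spec4.2.2.1
    have hfix4_2 : Theta σ4 (2:Fin 13) = 2 := by
      rw [hth4, Equiv.Perm.mul_apply, hfix3_2]
      exact perm_inv_map spec4.2.2.2.1
    have hfix4_3 : Theta σ4 (3:Fin 13) = 3 := by
      rw [hth4, Equiv.Perm.mul_apply, hfix3_3]
      exact perm_inv_map spec4.2.2.2.2
    -- level 5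
    have ha5_0 : Theta σ4 5 ≠ 0 := fun h => absurd ((Theta σ4).injective (h.trans (theta_zero σ4).symm)) (by decide)
    have ha5_1 : Theta σ4 5 ≠ 1 := fun h => absurd ((Theta σ4).injective (h.trans hfix4_1.symm)) (by decide)
    have ha5_2 : Theta σ4 5 ≠ 2 := fun h => absurd ((Theta σ4).injective (h.trans hfix4_2.symm)) (by decide)
    have ha5_3 : Theta σ4 5 ≠ 3 := fun h => absurd ((Theta σ4).injective (h.trans hfix4_3.symm)) (by decide)
    have ha5_4 : Theta σ4 5 ≠ 4 := fun h => absurd ((Theta σ4).injective (h.trans hfix4_4.symm)) (by decide)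
    obtain ⟨u5, hu5⟩ := MonoidHom.mem_range.mp (hsub (wordPerm_mem (w5 (Theta σ4 5))))
    set σ5 : StabD := u5⁻¹ * σ4 with hσ5def
    have hth5 : Theta σ5 = (wordPerm (w5 (Theta σ4 5)))⁻¹ * Theta σ4 := by
      rw [hσ5def, map_mul, map_inv, hu5]
    have spec5 := w5_spec (Theta σ4 5) ha5_0 ha5_1 ha5_2 ha5_3 ha5_4
    have hfix5_5 : Theta σ5 (5:Fin 13) = 5 := by
      rw [hth5, Equiv.Perm.mul_apply]
      exact perm_inv_map spec5.1
    have hfix5_1 : Theta σ5 (1:Fin 13) = 1 := by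
      rw [hth5, Equiv.Perm.mul_apply, hfix4_1]
      exact perm_inv_map spec5.2.2.1
    have hfix5_2 : Theta σ5 (2:Fin 13) = 2 := by
      rw [hth5, Equiv.Perm.mul_apply, hfix4_2]
      exact perm_inv_map spec5.2.2.2.1
    have hfix5_3 : Theta σ5 (3:Fin 13) = 3 := by
      rw [hth5, Equiv.Perm.mul_apply, hfix4_3]
      exact perm_inv_map spec5.2.2.2.2.1
    have hfix5_4 : Theta σ5 (4:Fin 13) = 4 := by
      rw [hth5, Equiv.Perm.mul_apply, hfix4_4]
      exact perm_inv_map spec5.2.2.2.2.2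
    -- σ5 fixes the five points 12, 8, 18, 13, 2 of D
    have hD5 := stabD_hD σ5.2
    have hfixD : ∀ x, ∀ hx : x ∈ Dset, Theta σ5 (rho x) = rho x → (↑σ5 : Equiv.Perm X24) x = x := by
      intro x hx hr
      rw [theta_spec σ5 x hx] at hr
      exact rho_inj _ ((hD5 x).mp hx) _ hx hr
    have e12 : (↑σ5 : Equiv.Perm X24) 12 = 12 := hfixD 12 (by decide) (by rw [show rho 12 = 1 from by decide]; exact hfix5_1)
    have e8 : (↑σ5 : Equiv.Perm X24) 8 = 8 := hfixD 8 (by decide) (by rw [show rho 8 = 2 from by decide]; exact hfix5_2)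
    have e18 : (↑σ5 : Equiv.Perm X24) 18 = 18 := hfixD 18 (by decide) (by rw [show rho 18 = 3 from by decide]; exact hfix5_3)
    have e13 : (↑σ5 : Equiv.Perm X24) 13 = 13 := hfixD 13 (by decide) (by rw [show rho 13 = 4 from by decide]; exact hfix5_4)
    have e2 : (↑σ5 : Equiv.Perm X24) 2 = 2 := hfixD 2 (by decide) (by rw [show rho 2 = 5 from by decide]; exact hfix5_5)
    have hfixDall := pinSharp (stabD_M24 σ5.2) hD5 e12 e8 e18 e13 e2
    have hth5_1 : Theta σ5 = 1 := by
      apply Equiv.ext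
      intro y
      rw [Equiv.Perm.one_apply]
      by_cases hy : y = 0
      · subst hy; exact theta_zero σ5
      · rw [theta_apply, hfixDall _ (rhoInv_mem y hy), rho_rhoInv]
    have h5M : Theta σ5 ∈ M12 := by rw [hth5_1]; exact one_mem _
    have h4M : Theta σ4 ∈ M12 := by
      have heq : Theta σ4 = wordPerm (w5 (Theta σ4 5)) * Theta σ5 := by
        rw [hth5, mul_inv_cancel_left]
      rw [heq]
      exact mul_mem (wordPerm_mem _) h5M
    have h3M : Theta σ3 ∈ M12 := by
      have heq : Theta σ3 = wordPerm (w4 (Theta σ3 4)) * Theta σ4 := by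
        rw [hth4, mul_inv_cancel_left]
      rw [heq]
      exact mul_mem (wordPerm_mem _) h4M
    have h2M : Theta σ2 ∈ M12 := by
      have heq : Theta σ2 = wordPerm (w3 (Theta σ2 3)) * Theta σ3 := by
        rw [hth3, mul_inv_cancel_left]
      rw [heq]
      exact mul_mem (wordPerm_mem _) h3M
    have h1M : Theta σ1 ∈ M12 := by
      have heq : Theta σ1 = wordPerm (w2 (Theta σ1 2)) * Theta σ2 := by
        rw [hth2, mul_inv_cancel_left]
      rw [heq]
      exact mul_mem (wordPerm_mem _) h2M
    have h0M : Theta σ0 ∈ M12 := by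
      have heq : Theta σ0 = wordPerm (w1 (Theta σ0 1)) * Theta σ1 := by
        rw [hth1, mul_inv_cancel_left]
      rw [heq]
      exact mul_mem (wordPerm_mem _) h1M
    exact h0M
  exact ⟨golay_of_alt (by decide), by decide, Theta, theta_inj, theta_spec, le_antisymm hsup hsub⟩
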